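/- arXiv:2406.01504 — 6 statements merged into one kernel-verified Lean document; each statement's English description precedes it below -/
import Mathlib

section
/- Every Šoltés hypergraph of order 5 is isomorphic to the hypergraph on vertex set {0,1,2,3,4} whose edges are the five pairs {i, i+1 mod 5} for i = 0,...,4 together with the full set {0,1,2,3,4}; in particular, the Šoltés hypergraph of minimum order is unique and has order 5. -/
variable {α : Type*} {β : Type*}

/-- A hypergraph: a finite vertex set together with a set of edges,
each an at-least-2-element subset of the vertex set. -/
structure SHypergraph (α : Type*) where
  verts : Finset α
  edges : Finset (Finset α)
  edge_sub : ∀ e ∈ edges, e ⊆ verts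
  edge_card : ∀ e ∈ edges, 2 ≤ e.card

namespace SHypergraph

/-- The 2-section graph of a hypergraph: two distinct vertices are adjacent
iff some edge contains both. -/
def twoSection (H : SHypergraph α) : SimpleGraph α where
  Adj u v := u ≠ v ∧ ∃ e ∈ H.edges, u ∈ e ∧ v ∈ e
  symm := by
    constructor
    rintro u v ⟨huv, e, he, hu, hv⟩
    exact ⟨huv.symm, e, he, hv, hu⟩
  loopless := by
    constructor
    rintro u ⟨h, -⟩
    exact h rfl

/-- Distance between two vertices: graph distance in the 2-section. -/
noncomputable def dist (H : SHypergraph α) (u v : α) : ℕ :=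
  H.twoSection.dist u v

/-- A hypergraph is connected if every two of its vertices are joined by a path. -/
def Connected (H : SHypergraph α) : Prop :=
  ∀ u ∈ H.verts, ∀ v ∈ H.verts, H.twoSection.Reachable u v

/-- The Wiener index (total distance): the sum of distances over all
unordered pairs of distinct vertices. -/
noncomputable def wiener [DecidableEq α] (H : SHypergraph α) : ℕ :=
  ∑ p ∈ H.verts.sym2.filter (fun p => ¬ p.IsDiag),
    Sym2.lift ⟨fun u v => H.dist u v, fun _ _ => SimpleGraph.dist_comm⟩ p

/-- Vertex deletion: remove the vertex and all edges containing it. -/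
def delete [DecidableEq α] (H : SHypergraph α) (v : α) : SHypergraph α where
  verts := H.verts.erase v
  edges := H.edges.filter fun e => v ∉ e
  edge_sub := by
    intro e he x hx
    rw [Finset.mem_filter] at he
    exact Finset.mem_erase.mpr ⟨fun h => he.2 (h ▸ hx), H.edge_sub e he.1 hx⟩
  edge_card := fun e he => H.edge_card e (Finset.mem_filter.mp he).1

/-- A Šoltés hypergraph: a connected hypergraph on at least 2 vertices such that
deleting any vertex leaves a connected hypergraph with the same Wiener index. -/
def IsSoltes [DecidableEq α] (H : SHypergraph α) : Prop :=
  2 ≤ H.verts.card ∧ H.Connected ∧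
    ∀ v ∈ H.verts, (H.delete v).Connected ∧ (H.delete v).wiener = H.wiener

/-- The diameter: the maximum distance over unordered pairs of distinct vertices. -/
noncomputable def diam [DecidableEq α] (H : SHypergraph α) : ℕ :=
  H.verts.offDiag.sup fun p => H.dist p.1 p.2

/-- The degree of a vertex: the number of edges containing it. -/
def degree [DecidableEq α] (H : SHypergraph α) (v : α) : ℕ :=
  (H.edges.filter fun e => v ∈ e).card

/-- SHypergraph isomorphism: a bijection between the vertex sets mapping
edges onto edges. -/
def IsIsoTo [DecidableEq β] (H : SHypergraph α) (H' : SHypergraph β) : Prop :=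
  ∃ f : α → β, Set.InjOn f ↑H.verts ∧ H'.verts = H.verts.image f ∧
    H'.edges = H.edges.image fun e => e.image f

end SHypergraph

/-- The 5-cycle together with one hyperedge containing all 5 vertices. -/
def cycleFivePlus : SHypergraph (Fin 5) where
  verts := Finset.univ
  edges := (Finset.univ.image fun i : Fin 5 => ({i, i + 1} : Finset (Fin 5))) ∪ {Finset.univ}
  edge_sub := by decide
  edge_card := by decide


-- ===== generic lemmas =====
namespace SHypergraph

lemma adj_mem (H : SHypergraph α) {u v : α} (h : H.twoSection.Adj u v) :
    u ∈ H.verts ∧ v ∈ H.verts := by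
  obtain ⟨-, e, he, hu, hv⟩ := h
  exact ⟨H.edge_sub e he hu, H.edge_sub e he hv⟩

lemma support_subset (H : SHypergraph α) {u v : α} (p : H.twoSection.Walk u v)
    (hu : u ∈ H.verts) : ∀ x ∈ p.support, x ∈ H.verts := by
  induction p with
  | nil => intro x hx; simp only [SimpleGraph.Walk.support_nil, List.mem_singleton] at hx; exact hx ▸ hu
  | cons h q ih =>
    intro x hx
    rw [SimpleGraph.Walk.support_cons, List.mem_cons] at hx
    rcases hx with rfl | hx
    · exact hu
    · exact ih (H.adj_mem h).2 x hx

lemma dist_le_card (H : SHypergraph α) {u v : α} (hu : u ∈ H.verts)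
    (hr : H.twoSection.Reachable u v) : H.dist u v ≤ H.verts.card - 1 := by
  classical
  obtain ⟨p, hp⟩ := hr.exists_walk_length_eq_dist
  have h1 : H.dist u v ≤ p.bypass.length := SimpleGraph.dist_le _
  have h2 : p.bypass.support.length = p.bypass.length + 1 := SimpleGraph.Walk.length_support _
  have hnd : p.bypass.support.Nodup := (p.bypass_isPath).support_nodup
  have hsub : ∀ x ∈ p.bypass.support, x ∈ H.verts := fun x hx =>
    H.support_subset p hu x (p.support_bypass_subset hx)
  have hc : p.bypass.support.length ≤ H.verts.card := by
    rw [← List.toFinset_card_of_nodup hnd]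
    apply Finset.card_le_card
    intro x hx
    exact hsub x (List.mem_toFinset.mp hx)
  omega

lemma one_le_dist (H : SHypergraph α) {u v : α} (hne : u ≠ v)
    (hr : H.twoSection.Reachable u v) : 1 ≤ H.dist u v :=
  hr.pos_dist_of_ne hne

-- exact length walk decompositions
lemma walk_len1 {G : SimpleGraph α} {u v : α} (p : G.Walk u v) (h : p.length = 1) :
    G.Adj u v := by
  cases p with
  | nil => simp at h
  | cons h1 q =>
    cases q with
    | nil => exact h1
    | cons h2 r => simp [SimpleGraph.Walk.length_cons] at h

lemma walk_len2 {G : SimpleGraph α} {u v : α} (p : G.Walk u v) (h : p.length = 2) :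
    ∃ z, G.Adj u z ∧ G.Adj z v := by
  cases p with
  | nil => simp at h
  | cons h1 q =>
    cases q with
    | nil => simp at h
    | cons h2 r =>
      cases r with
      | nil => exact ⟨_, h1, h2⟩
      | cons h3 s => simp [SimpleGraph.Walk.length_cons] at h

lemma walk_len3 {G : SimpleGraph α} {u v : α} (p : G.Walk u v) (h : p.length = 3) :
    ∃ z w, G.Adj u z ∧ G.Adj z w ∧ G.Adj w v := by
  cases p with
  | nil => simp at h
  | cons h1 q =>
    cases q with
    | nil => simp at h
    | cons h2 r =>
      cases r with
      | nil => simp at h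
      | cons h3 s =>
        cases s with
        | nil => exact ⟨_, _, h1, h2, h3⟩
        | cons h4 t => simp [SimpleGraph.Walk.length_cons] at h

lemma dist_le_one_of_adj {G : SimpleGraph α} {u v : α} (h : G.Adj u v) : G.dist u v ≤ 1 := by
  have := SimpleGraph.dist_le (SimpleGraph.Walk.cons h .nil)
  simpa using this

lemma dist_le_two {G : SimpleGraph α} {u v z : α} (h1 : G.Adj u z) (h2 : G.Adj z v) :
    G.dist u v ≤ 2 := by
  have := SimpleGraph.dist_le (SimpleGraph.Walk.cons h1 (SimpleGraph.Walk.cons h2 .nil))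
  simpa using this

-- wiener index basics
variable [DecidableEq α]

lemma sym2_ndiag_eq (s : Finset α) :
    s.sym2.filter (fun p => ¬ p.IsDiag) = s.offDiag.image Sym2.mk.uncurry := by
  rw [Finset.sym2_eq_image, Sym2.filter_image_mk_not_isDiag]

lemma card_sym2_ndiag (s : Finset α) :
    (s.sym2.filter (fun p => ¬ p.IsDiag)).card = s.card.choose 2 := by
  rw [sym2_ndiag_eq, Sym2.card_image_offDiag]

lemma wiener_lower (H : SHypergraph α) (hc : H.Connected) :
    H.verts.card.choose 2 ≤ H.wiener := by
  rw [← card_sym2_ndiag H.verts]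
  unfold wiener
  rw [Finset.card_eq_sum_ones]
  apply Finset.sum_le_sum
  intro q hq
  rw [Finset.mem_filter] at hq
  obtain ⟨hq1, hq2⟩ := hq
  induction q with
  | _ a b =>
    rw [Finset.mk_mem_sym2_iff] at hq1
    rw [Sym2.mk_isDiag_iff] at hq2
    exact H.one_le_dist hq2 (hc a hq1.1 b hq1.2)

lemma wiener_upper (H : SHypergraph α) (hc : H.Connected) (k : ℕ) (hk : H.verts.card - 1 ≤ k) :
    H.wiener ≤ H.verts.card.choose 2 * k := by
  rw [← card_sym2_ndiag H.verts]
  unfold wiener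
  rw [Finset.card_eq_sum_ones, Finset.sum_mul]
  apply Finset.sum_le_sum
  intro q hq
  rw [Finset.mem_filter] at hq
  obtain ⟨hq1, hq2⟩ := hq
  induction q with
  | _ a b =>
    rw [Finset.mk_mem_sym2_iff] at hq1
    calc Sym2.lift ⟨fun u v => H.dist u v, fun _ _ => SimpleGraph.dist_comm⟩ s(a,b)
        = H.dist a b := rfl
      _ ≤ H.verts.card - 1 := H.dist_le_card hq1.1 (hc a hq1.1 b hq1.2)
      _ ≤ 1 * k := by omega

lemma two_mul_wiener (H : SHypergraph α) :
    2 * H.wiener = ∑ p ∈ H.verts.offDiag, H.dist p.1 p.2 := by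
  classical
  unfold wiener
  rw [sym2_ndiag_eq]
  have key : ∑ p ∈ H.verts.offDiag,
      (Sym2.lift ⟨fun u v => H.dist u v, fun _ _ => SimpleGraph.dist_comm⟩) (Sym2.mk.uncurry p)
      = ∑ q ∈ H.verts.offDiag.image Sym2.mk.uncurry,
        (H.verts.offDiag.filter (fun p => Sym2.mk.uncurry p = q)).card •
          (Sym2.lift ⟨fun u v => H.dist u v, fun _ _ => SimpleGraph.dist_comm⟩) q :=
    Finset.sum_comp _ Sym2.mk.uncurry
  have hfib : ∀ q ∈ H.verts.offDiag.image Sym2.mk.uncurry,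
      (H.verts.offDiag.filter (fun p => Sym2.mk.uncurry p = q)).card = 2 := by
    rintro q hq
    induction q with
    | _ x y =>
      simp_rw [Finset.mem_image, Finset.mem_offDiag] at hq
      obtain ⟨a, ⟨ha₁, ha₂, ha⟩, h⟩ := hq
      replace h := Sym2.eq.1 h
      obtain ⟨hx, hy, hxy⟩ : x ∈ H.verts ∧ y ∈ H.verts ∧ x ≠ y := by
        cases h <;> refine ⟨‹_›, ‹_›, ?_⟩ <;> [exact ha; exact ha.symm]
      have hxy' : y ≠ x := hxy.symm
      have : H.verts.offDiag.filter (fun z => Sym2.mk.uncurry z = s(x, y)) = {(x, y), (y, x)} := by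
        ext ⟨x₁, y₁⟩
        rw [Finset.mem_filter, Finset.mem_insert, Finset.mem_singleton, Function.uncurry_apply_pair, Sym2.eq_iff,
          Prod.mk.injEq, Prod.mk.injEq, and_iff_right_iff_imp]
        rintro (⟨rfl, rfl⟩ | ⟨rfl, rfl⟩) <;> rw [Finset.mem_offDiag] <;> exact ⟨‹_›, ‹_›, ‹_›⟩
      rw [this, Finset.card_insert_of_notMem, Finset.card_singleton]
      simp only [Finset.mem_singleton, Prod.mk.injEq, not_and]
      exact fun _ => hxy'
  calc 2 * ∑ q ∈ H.verts.offDiag.image Sym2.mk.uncurry,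
        (Sym2.lift ⟨fun u v => H.dist u v, fun _ _ => SimpleGraph.dist_comm⟩) q
      = ∑ q ∈ H.verts.offDiag.image Sym2.mk.uncurry,
        (H.verts.offDiag.filter (fun p => Sym2.mk.uncurry p = q)).card •
          (Sym2.lift ⟨fun u v => H.dist u v, fun _ _ => SimpleGraph.dist_comm⟩) q := by
        rw [Finset.mul_sum]
        exact Finset.sum_congr rfl fun q hq => by rw [hfib q hq, smul_eq_mul]
    _ = ∑ p ∈ H.verts.offDiag,
        (Sym2.lift ⟨fun u v => H.dist u v, fun _ _ => SimpleGraph.dist_comm⟩) (Sym2.mk.uncurry p) :=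
        key.symm
    _ = ∑ p ∈ H.verts.offDiag, H.dist p.1 p.2 := by
        exact Finset.sum_congr rfl fun p _ => by cases p; simp [Sym2.lift_mk]
end SHypergraph


namespace SolAux

def matN (a b c d e f g h i j : Bool) : Nat → Nat → Bool := fun x y =>
  match x, y with
  | 0,1 => a | 1,0 => a
  | 0,2 => b | 2,0 => b
  | 0,3 => c | 3,0 => c
  | 0,4 => d | 4,0 => d
  | 1,2 => e | 2,1 => e
  | 1,3 => f | 3,1 => f
  | 1,4 => g | 4,1 => g
  | 2,3 => h | 3,2 => h
  | 2,4 => i | 4,2 => i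
  | 3,4 => j | 4,3 => j
  | _,_ => false

def ball5 (p : Nat → Bool) : Bool := p 0 && p 1 && p 2 && p 3 && p 4

theorem ball5_iff (p : Nat → Bool) : ball5 p = true ↔ ∀ x, x < 5 → p x = true := by
  constructor
  · intro h x hx
    simp only [ball5, Bool.and_eq_true] at h
    interval_cases x <;> tauto
  · intro h
    simp only [ball5, Bool.and_eq_true]
    exact ⟨⟨⟨⟨h 0 (by norm_num), h 1 (by norm_num)⟩, h 2 (by norm_num)⟩, h 3 (by norm_num)⟩,
      h 4 (by norm_num)⟩

def cmn (A : Nat → Nat → Bool) (x y : Nat) : Bool :=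
  (A x 0 && A 0 y) || (A x 1 && A 1 y) || (A x 2 && A 2 y) || (A x 3 && A 3 y) || (A x 4 && A 4 y)

def dformN (A : Nat → Nat → Bool) (x y : Nat) : Nat :=
  if x = y then 0 else if A x y then 1 else if cmn A x y then 2 else 3

def cell (v : Nat) (A : Nat → Nat → Bool) (x y : Nat) : Nat :=
  if x = v ∨ y = v then 0 else dformN A x y

def rowN (v : Nat) (A : Nat → Nat → Bool) (x : Nat) : Nat :=
  cell v A x 0 + cell v A x 1 + cell v A x 2 + cell v A x 3 + cell v A x 4

def fsumN (v : Nat) (A : Nat → Nat → Bool) : Nat :=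
  rowN v A 0 + rowN v A 1 + rowN v A 2 + rowN v A 3 + rowN v A 4

def connB (A : Nat → Nat → Bool) (x y : Nat) : Bool :=
  (x == y) || A x y || cmn A x y ||
  (A x 0 && cmn A 0 y) || (A x 1 && cmn A 1 y) || (A x 2 && cmn A 2 y) ||
  (A x 3 && cmn A 3 y) || (A x 4 && cmn A 4 y)

def delN (v : Nat) (A : Nat → Nat → Bool) : Nat → Nat → Bool :=
  fun x y => if x = v || y = v then false else A x y

def zeroRow (v : Nat) (A : Nat → Nat → Bool) : Bool := ball5 fun x => !(A x v)

def connAll (v : Nat) (A : Nat → Nat → Bool) : Bool :=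
  ball5 fun x => ball5 fun y => (x == v) || (y == v) || connB A x y

def triFree (A : Nat → Nat → Bool) : Bool :=
  ball5 fun x => ball5 fun y => ball5 fun z =>
    (x == y) || (y == z) || (x == z) || !(A x y && A y z && A x z)

def cycB (u w : Nat) : Bool := (w == (u+1) % 5) || (u == (w+1) % 5)

def look (p0 p1 p2 p3 p4 : Nat) : Nat → Nat := fun x =>
  match x with | 0 => p0 | 1 => p1 | 2 => p2 | 3 => p3 | _ => p4

-- helper facts about the Nat-side gadgets
theorem cmn_of {A : Nat → Nat → Bool} {x y k : Nat} (hk : k < 5)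
    (h1 : A x k = true) (h2 : A k y = true) : cmn A x y = true := by
  interval_cases k <;> simp [cmn, h1, h2]

theorem cmn_exists {A : Nat → Nat → Bool} {x y : Nat} (h : cmn A x y = true) :
    ∃ k, k < 5 ∧ A x k = true ∧ A k y = true := by
  simp only [cmn, Bool.or_eq_true, Bool.and_eq_true] at h
  rcases h with ((((h|h)|h)|h)|h)
  exacts [⟨0, by norm_num, h⟩, ⟨1, by norm_num, h⟩, ⟨2, by norm_num, h⟩,
    ⟨3, by norm_num, h⟩, ⟨4, by norm_num, h⟩]

theorem connB_of_eq {A : Nat → Nat → Bool} {x y : Nat} (h : x = y) : connB A x y = true := by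
  simp [connB, h]

theorem connB_of_adj {A : Nat → Nat → Bool} {x y : Nat} (h : A x y = true) :
    connB A x y = true := by simp [connB, h]

theorem connB_of_cmn {A : Nat → Nat → Bool} {x y : Nat} (h : cmn A x y = true) :
    connB A x y = true := by simp [connB, h]

theorem connB_of_chain {A : Nat → Nat → Bool} {x y k : Nat} (hk : k < 5)
    (h1 : A x k = true) (h2 : cmn A k y = true) : connB A x y = true := by
  interval_cases k <;> simp [connB, h1, h2]

theorem cmn_congr {A A' : Nat → Nat → Bool} {x y : Nat}
    (h : ∀ x' < 5, ∀ y' < 5, A x' y' = A' x' y') (hx : x < 5) (hy : y < 5) :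
    cmn A x y = cmn A' x y := by
  unfold cmn
  rw [h x hx 0 (by norm_num), h x hx 1 (by norm_num), h x hx 2 (by norm_num),
    h x hx 3 (by norm_num), h x hx 4 (by norm_num), h 0 (by norm_num) y hy,
    h 1 (by norm_num) y hy, h 2 (by norm_num) y hy, h 3 (by norm_num) y hy,
    h 4 (by norm_num) y hy]

theorem dformN_congr {A A' : Nat → Nat → Bool} {x y : Nat}
    (h : ∀ x' < 5, ∀ y' < 5, A x' y' = A' x' y') (hx : x < 5) (hy : y < 5) :
    dformN A x y = dformN A' x y := by
  unfold dformN
  rw [h x hx y hy, cmn_congr h hx hy]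

theorem cell_congr {A A' : Nat → Nat → Bool} {v x y : Nat}
    (h : ∀ x' < 5, ∀ y' < 5, A x' y' = A' x' y') (hx : x < 5) (hy : y < 5) :
    cell v A x y = cell v A' x y := by
  unfold cell
  split
  · rfl
  · exact dformN_congr h hx hy

theorem fsum_eq_sum (v : Nat) (A : Nat → Nat → Bool) :
    fsumN v A = ∑ x : Fin 5, ∑ y : Fin 5, cell v A ↑x ↑y := by
  have h3 : ((3:Fin 5):ℕ) = 3 := rfl
  have h4 : ((4:Fin 5):ℕ) = 4 := rfl
  simp only [Fin.sum_univ_five, h3, h4, Fin.isValue, Fin.val_zero, Fin.val_one, Fin.val_two]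
  rfl

theorem fsum_congr {A A' : Nat → Nat → Bool} (v : Nat)
    (h : ∀ x' < 5, ∀ y' < 5, A x' y' = A' x' y') : fsumN v A = fsumN v A' := by
  rw [fsum_eq_sum, fsum_eq_sum]
  exact Finset.sum_congr rfl fun x _ => Finset.sum_congr rfl fun y _ =>
    cell_congr h x.isLt y.isLt

theorem look_lt {p0 p1 p2 p3 p4 : Nat} (h0 : p0 < 5) (h1 : p1 < 5) (h2 : p2 < 5)
    (h3 : p3 < 5) (h4 : p4 < 5) (x : Nat) : look p0 p1 p2 p3 p4 x < 5 := by
  unfold look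
  split <;> assumption

theorem matN_spec (T : Fin 5 → Fin 5 → Bool) (hsymm : ∀ x y, T x y = T y x)
    (hdiag : ∀ x, T x x = false) (x y : Fin 5) :
    matN (T 0 1) (T 0 2) (T 0 3) (T 0 4) (T 1 2) (T 1 3) (T 1 4) (T 2 3) (T 2 4) (T 3 4)
      ↑x ↑y = T x y := by
  fin_cases x <;> fin_cases y <;>
    first
      | rfl
      | exact (hdiag _).symm
      | exact (hsymm _ _).symm
      | exact hsymm _ _

end SolAux


-- ======== decidable combinatorial cores ========
namespace SolAux

set_option maxHeartbeats 4000000 in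
theorem DEL : ∀ (a b c d e f g h i j : Bool), ∀ v < 5,
    zeroRow v (matN a b c d e f g h i j) = true →
    connAll v (matN a b c d e f g h i j) = true →
    fsumN v (matN a b c d e f g h i j) ≤ 20 ∧
      (fsumN v (matN a b c d e f g h i j) = 20 → triFree (matN a b c d e f g h i j) = true) := by
  decide

set_option maxHeartbeats 4000000 in
theorem D5 : ∀ (a b c d e f g h i j : Bool),
    (∀ v < 5, fsumN v (delN v (matN a b c d e f g h i j)) = 20) →
    ∃ p0 < 5, ∃ p1 < 5, ∃ p2 < 5, ∃ p3 < 5, ∃ p4 < 5,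
      (∀ x < 5, ∀ y < 5, x ≠ y → look p0 p1 p2 p3 p4 x ≠ look p0 p1 p2 p3 p4 y) ∧
      ∀ x < 5, ∀ y < 5, (matN a b c d e f g h i j x y = true ↔
        cycB (look p0 p1 p2 p3 p4 x) (look p0 p1 p2 p3 p4 y) = true) := by
  decide

end SolAux

open SolAux

-- ======== bridge defs ========
namespace SHypergraph

lemma bool_eq_of_iff {a b : Bool} (h : a = true ↔ b = true) : a = b := by
  cases a <;> cases b <;> simp_all

noncomputable def adjB (K : SHypergraph α) (φ : Fin 5 → α) : Nat → Nat → Bool := fun x y =>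
  if h : x < 5 ∧ y < 5 then
    @decide (K.twoSection.Adj (φ ⟨x, h.1⟩) (φ ⟨y, h.2⟩)) (Classical.propDecidable _)
  else false

lemma adjB_iff' (K : SHypergraph α) (φ : Fin 5 → α) {x y : Nat} (hx : x < 5) (hy : y < 5) :
    adjB K φ x y = true ↔ K.twoSection.Adj (φ ⟨x, hx⟩) (φ ⟨y, hy⟩) := by
  unfold adjB
  rw [dif_pos ⟨hx, hy⟩]
  exact @decide_eq_true_iff _ (Classical.propDecidable _)

lemma adjB_iff (K : SHypergraph α) (φ : Fin 5 → α) (x y : Fin 5) :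
    adjB K φ ↑x ↑y = true ↔ K.twoSection.Adj (φ x) (φ y) := by
  rw [adjB_iff' K φ x.isLt y.isLt]

lemma adjB_symm (K : SHypergraph α) (φ : Fin 5 → α) (x y : Nat) :
    adjB K φ x y = adjB K φ y x := by
  unfold adjB
  by_cases h : x < 5 ∧ y < 5
  · rw [dif_pos h, dif_pos ⟨h.2, h.1⟩]
    exact decide_eq_decide.mpr ⟨fun a => a.symm, fun a => a.symm⟩
  · rw [dif_neg h, dif_neg (fun h' => h ⟨h'.2, h'.1⟩)]

lemma adjB_diag (K : SHypergraph α) (φ : Fin 5 → α) (x : Nat) : adjB K φ x x = false := by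
  unfold adjB
  by_cases h : x < 5 ∧ x < 5
  · rw [dif_pos h]
    exact @decide_eq_false _ (Classical.propDecidable _) (K.twoSection.loopless.irrefl _)
  · rw [dif_neg h]

noncomputable def pairB [DecidableEq α] (H : SHypergraph α) (φ : Fin 5 → α) :
    Nat → Nat → Bool := fun x y =>
  if h : x < 5 ∧ y < 5 then
    @decide (({φ ⟨x, h.1⟩, φ ⟨y, h.2⟩} : Finset α) ∈ H.edges ∧ x ≠ y)
      (Classical.propDecidable _)
  else false

lemma pairB_iff' [DecidableEq α] (H : SHypergraph α) (φ : Fin 5 → α) {x y : Nat}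
    (hx : x < 5) (hy : y < 5) :
    pairB H φ x y = true ↔
      (({φ ⟨x, hx⟩, φ ⟨y, hy⟩} : Finset α) ∈ H.edges ∧ x ≠ y) := by
  unfold pairB
  rw [dif_pos ⟨hx, hy⟩]
  exact @decide_eq_true_iff _ (Classical.propDecidable _)

lemma pairB_symm [DecidableEq α] (H : SHypergraph α) (φ : Fin 5 → α) (x y : Nat) :
    pairB H φ x y = pairB H φ y x := by
  unfold pairB
  by_cases h : x < 5 ∧ y < 5
  · rw [dif_pos h, dif_pos ⟨h.2, h.1⟩]
    apply decide_eq_decide.mpr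
    rw [Finset.pair_comm]
    exact ⟨fun a => ⟨a.1, a.2.symm⟩, fun a => ⟨a.1, a.2.symm⟩⟩
  · rw [dif_neg h, dif_neg (fun h' => h ⟨h'.2, h'.1⟩)]

lemma pairB_diag [DecidableEq α] (H : SHypergraph α) (φ : Fin 5 → α) (x : Nat) :
    pairB H φ x x = false := by
  unfold pairB
  by_cases h : x < 5 ∧ x < 5
  · rw [dif_pos h]
    exact @decide_eq_false _ (Classical.propDecidable _) (fun a => a.2 rfl)
  · rw [dif_neg h]

-- small-order helper lemmas
lemma exists_adj [DecidableEq α] (H : SHypergraph α) (hc : H.Connected)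
    (h2 : 2 ≤ H.verts.card) : ∃ a b, H.twoSection.Adj a b := by
  have h1 : 1 < H.verts.card := by omega
  obtain ⟨u, hu, v, hv, huv⟩ := Finset.one_lt_card.mp h1
  obtain ⟨p, -⟩ := (hc u hu v hv).exists_walk_length_eq_dist
  cases p with
  | nil => exact absurd rfl huv
  | cons h q => exact ⟨_, _, h⟩

lemma dist_eq_one [DecidableEq α] (H : SHypergraph α) {u v : α}
    (h : H.twoSection.Adj u v) : H.dist u v = 1 := by
  have h1 : H.dist u v ≤ 1 := by
    have := SimpleGraph.dist_le (SimpleGraph.Walk.cons h .nil)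
    simpa [SHypergraph.dist] using this
  have h2 : 1 ≤ H.dist u v :=
    H.one_le_dist h.ne (SimpleGraph.Adj.reachable h)
  omega

lemma wiener_lt [DecidableEq α] (H : SHypergraph α) (hc : H.Connected)
    (h3 : 3 ≤ H.verts.card) :
    H.wiener < H.verts.card.choose 2 * (H.verts.card - 1) := by
  obtain ⟨a, b, hab⟩ := H.exists_adj hc (by omega)
  have ha := (H.adj_mem hab).1
  have hb := (H.adj_mem hab).2
  rw [← card_sym2_ndiag H.verts]
  unfold wiener
  have hq0 : s(a, b) ∈ H.verts.sym2.filter (fun p => ¬ p.IsDiag) := by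
    rw [Finset.mem_filter, Finset.mk_mem_sym2_iff, Sym2.mk_isDiag_iff]
    exact ⟨⟨ha, hb⟩, hab.ne⟩
  have hlt : ∑ q ∈ H.verts.sym2.filter (fun p => ¬ p.IsDiag),
      Sym2.lift ⟨fun u v => H.dist u v, fun _ _ => SimpleGraph.dist_comm⟩ q
      < ∑ _q ∈ H.verts.sym2.filter (fun p => ¬ p.IsDiag), (H.verts.card - 1) := by
    apply Finset.sum_lt_sum
    · intro q hq
      rw [Finset.mem_filter] at hq
      obtain ⟨hq1, -⟩ := hq
      induction q with
      | _ x y =>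
        rw [Finset.mk_mem_sym2_iff] at hq1
        exact H.dist_le_card hq1.1 (hc x hq1.1 y hq1.2)
    · refine ⟨s(a, b), hq0, ?_⟩
      have : Sym2.lift ⟨fun u v => H.dist u v, fun _ _ => SimpleGraph.dist_comm⟩ s(a,b)
          = H.dist a b := rfl
      rw [this, H.dist_eq_one hab]
      omega
  calc ∑ q ∈ H.verts.sym2.filter (fun p => ¬ p.IsDiag),
        Sym2.lift ⟨fun u v => H.dist u v, fun _ _ => SimpleGraph.dist_comm⟩ q
      < ∑ _q ∈ H.verts.sym2.filter (fun p => ¬ p.IsDiag), (H.verts.card - 1) := hlt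
    _ = (H.verts.sym2.filter (fun p => ¬ p.IsDiag)).card * (H.verts.card - 1) := by
        rw [Finset.sum_const, smul_eq_mul]

-- ======== the big per-vertex lemma for order 5 ========

lemma per_t [DecidableEq α] (H : SHypergraph α) (φ : Fin 5 → α)
    (hinj : Function.Injective φ) (hmem : ∀ i, φ i ∈ H.verts)
    (hsurj : ∀ a ∈ H.verts, ∃ i, φ i = a) (hcard : H.verts.card = 5)
    (t : Fin 5) (hc' : (H.delete (φ t)).Connected) :
    fsumN ↑t (adjB (H.delete (φ t)) φ) = 2 * (H.delete (φ t)).wiener ∧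
    zeroRow ↑t (adjB (H.delete (φ t)) φ) = true ∧
    connAll ↑t (adjB (H.delete (φ t)) φ) = true ∧
    (∀ y < 5, adjB (H.delete (φ t)) φ ↑t y = false) := by
  set K := H.delete (φ t) with hK
  have hKverts : K.verts = H.verts.erase (φ t) := rfl
  have hKcard : K.verts.card = 4 := by
    rw [hKverts, Finset.card_erase_of_mem (hmem t), hcard]
  have hmemK : ∀ x : Fin 5, x ≠ t → φ x ∈ K.verts := fun x hx =>
    Finset.mem_erase.mpr ⟨fun h => hx (hinj h), hmem x⟩
  have hsurjK : ∀ a ∈ K.verts, ∃ x : Fin 5, x ≠ t ∧ φ x = a := by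
    intro a ha
    rw [hKverts, Finset.mem_erase] at ha
    obtain ⟨x, rfl⟩ := hsurj a ha.2
    exact ⟨x, fun h => ha.1 (h ▸ rfl), rfl⟩
  have hAB : ∀ x y : Fin 5, (adjB K φ ↑x ↑y = true ↔ K.twoSection.Adj (φ x) (φ y)) :=
    adjB_iff K φ
  -- column & row of t vanish
  have hcol : ∀ y < 5, adjB K φ y ↑t = false := by
    intro y hy
    rcases Bool.eq_false_or_eq_true (adjB K φ y ↑t) with h | h
    swap
    · exact h
    exfalso
    have := (adjB_iff' K φ hy t.isLt).mp h
    have hmem2 := (K.adj_mem this).2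
    rw [hKverts, Finset.mem_erase] at hmem2
    exact hmem2.1 rfl
  have hrow : ∀ y < 5, adjB K φ ↑t y = false := by
    intro y hy
    rw [adjB_symm]
    exact hcol y hy
  have hzero : zeroRow ↑t (adjB K φ) = true := by
    rw [zeroRow, ball5_iff]
    intro x hx
    rw [hcol x hx]
    rfl
  -- distance formula
  have hdist : ∀ x y : Fin 5, x ≠ t → y ≠ t →
      dformN (adjB K φ) ↑x ↑y = K.dist (φ x) (φ y) := by
    intro x y hx hy
    by_cases hxy : x = y
    · subst hxy
      rw [dformN, if_pos rfl]
      have : K.dist (φ x) (φ x) = 0 := SimpleGraph.dist_self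
      omega
    · have hne : (↑x : ℕ) ≠ ↑y := fun h => hxy (Fin.val_injective h)
      have hφne : φ x ≠ φ y := fun h => hxy (hinj h)
      have hr : K.twoSection.Reachable (φ x) (φ y) :=
        hc' _ (hmemK x hx) _ (hmemK y hy)
      have hdpos : 1 ≤ K.dist (φ x) (φ y) := K.one_le_dist hφne hr
      have hdle : K.dist (φ x) (φ y) ≤ 3 := by
        have := K.dist_le_card (hmemK x hx) hr
        omega
      rw [dformN, if_neg hne]
      by_cases hadj : adjB K φ ↑x ↑y = true
      · rw [if_pos hadj]
        exact (K.dist_eq_one ((hAB x y).mp hadj)).symm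
      · have hd1 : K.dist (φ x) (φ y) ≠ 1 := by
          intro h1
          obtain ⟨p, hp⟩ := hr.exists_walk_length_eq_dist
          exact hadj ((hAB x y).mpr (walk_len1 p (by rw [hp]; exact h1)))
        rw [if_neg hadj]
        by_cases hcmn : cmn (adjB K φ) ↑x ↑y = true
        · rw [if_pos hcmn]
          obtain ⟨k, hk5, h1, h2⟩ := cmn_exists hcmn
          have a1 : K.twoSection.Adj (φ x) (φ ⟨k, hk5⟩) := by
            have := (adjB_iff' K φ x.isLt hk5).mp h1
            simpa using this
          have a2 : K.twoSection.Adj (φ ⟨k, hk5⟩) (φ y) := by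
            have := (adjB_iff' K φ hk5 y.isLt).mp h2
            simpa using this
          have hd2 : K.dist (φ x) (φ y) ≤ 2 := by
            have := SimpleGraph.dist_le (SimpleGraph.Walk.cons a1 (SimpleGraph.Walk.cons a2 .nil))
            simpa [SHypergraph.dist] using this
          omega
        · rw [if_neg hcmn]
          have hd2 : K.dist (φ x) (φ y) ≠ 2 := by
            intro h2
            obtain ⟨p, hp⟩ := hr.exists_walk_length_eq_dist
            obtain ⟨z, a1, a2⟩ := walk_len2 p (by rw [hp]; exact h2)
            have hz : z ∈ K.verts := (K.adj_mem a1).2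
            obtain ⟨k, -, rfl⟩ := hsurjK z hz
            exact hcmn (cmn_of k.isLt ((hAB x k).mpr a1) ((hAB k y).mpr a2))
          omega
  -- connAll
  have hconnAll : connAll ↑t (adjB K φ) = true := by
    rw [connAll, ball5_iff]
    intro x hx
    rw [ball5_iff]
    intro y hy
    by_cases hxt : x = ↑t
    · subst hxt; simp
    · by_cases hyt : y = ↑t
      · subst hyt; simp
      · have hX : (⟨x, hx⟩ : Fin 5) ≠ t := fun h => hxt (by rw [← h])
        have hY : (⟨y, hy⟩ : Fin 5) ≠ t := fun h => hyt (by rw [← h])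
        suffices h : connB (adjB K φ) x y = true by simp [h]
        by_cases hxy : x = y
        · exact connB_of_eq hxy
        · have hφne : φ (⟨x, hx⟩ : Fin 5) ≠ φ ⟨y, hy⟩ := by
            intro h
            exact hxy (congrArg Fin.val (hinj h))
          have hr : K.twoSection.Reachable (φ ⟨x, hx⟩) (φ ⟨y, hy⟩) :=
            hc' _ (hmemK _ hX) _ (hmemK _ hY)
          have hd1 : 1 ≤ K.dist (φ ⟨x, hx⟩) (φ ⟨y, hy⟩) := K.one_le_dist hφne hr
          have hd3 : K.dist (φ ⟨x, hx⟩) (φ ⟨y, hy⟩) ≤ 3 := by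
            have := K.dist_le_card (hmemK _ hX) hr
            omega
          obtain ⟨p, hp⟩ := hr.exists_walk_length_eq_dist
          have hcase : K.dist (φ ⟨x, hx⟩) (φ ⟨y, hy⟩) = 1 ∨
              K.dist (φ ⟨x, hx⟩) (φ ⟨y, hy⟩) = 2 ∨
              K.dist (φ ⟨x, hx⟩) (φ ⟨y, hy⟩) = 3 := by omega
          rcases hcase with h | h | h
          · exact connB_of_adj ((adjB_iff' K φ hx hy).mpr (walk_len1 p (by rw [hp]; exact h)))
          · obtain ⟨z, a1, a2⟩ := walk_len2 p (by rw [hp]; exact h)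
            obtain ⟨k, -, rfl⟩ := hsurjK z (K.adj_mem a1).2
            exact connB_of_cmn (cmn_of k.isLt
              ((adjB_iff' K φ hx k.isLt).mpr (by simpa using a1))
              ((adjB_iff' K φ k.isLt hy).mpr (by simpa using a2)))
          · obtain ⟨z, w, a1, a2, a3⟩ := walk_len3 p (by rw [hp]; exact h)
            obtain ⟨k, -, rfl⟩ := hsurjK z (K.adj_mem a1).2
            obtain ⟨l, -, rfl⟩ := hsurjK w (K.adj_mem a2).2
            exact connB_of_chain k.isLt
              ((adjB_iff' K φ hx k.isLt).mpr (by simpa using a1))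
              (cmn_of l.isLt
                ((adjB_iff' K φ k.isLt l.isLt).mpr (by simpa using a2))
                ((adjB_iff' K φ l.isLt hy).mpr (by simpa using a3)))
  -- the sum
  have hsum : fsumN ↑t (adjB K φ) = 2 * K.wiener := by
    rw [fsum_eq_sum, K.two_mul_wiener]
    rw [← Finset.sum_product']
    have step1 : ∑ p ∈ (Finset.univ ×ˢ Finset.univ : Finset (Fin 5 × Fin 5)),
        cell ↑t (adjB K φ) ↑p.1 ↑p.2
        = ∑ p ∈ (Finset.univ ×ˢ Finset.univ : Finset (Fin 5 × Fin 5)),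
          (if p.1 ≠ p.2 ∧ p.1 ≠ t ∧ p.2 ≠ t then K.dist (φ p.1) (φ p.2) else 0) := by
      apply Finset.sum_congr rfl
      rintro ⟨x, y⟩ -
      simp only
      by_cases hxy : x = y
      · subst hxy
        rw [if_neg (by tauto)]
        rw [cell]
        split
        · rfl
        · rw [dformN, if_pos rfl]
      · by_cases hxt : x = t
        · subst hxt
          rw [if_neg (by tauto), cell, if_pos (Or.inl rfl)]
        · by_cases hyt : y = t
          · subst hyt
            rw [if_neg (by tauto), cell, if_pos (Or.inr rfl)]
          · rw [if_pos ⟨hxy, hxt, hyt⟩, cell,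
              if_neg (by
                push_neg
                constructor
                · exact fun h => hxt (Fin.val_injective h)
                · exact fun h => hyt (Fin.val_injective h)),
              hdist x y hxt hyt]
    rw [step1, ← Finset.sum_filter]
    apply Finset.sum_bij (i := fun (p : Fin 5 × Fin 5) _ => (φ p.1, φ p.2))
    · rintro ⟨x, y⟩ hp
      rw [Finset.mem_filter] at hp
      obtain ⟨-, hxy, hxt, hyt⟩ := hp
      exact Finset.mem_offDiag.mpr ⟨hmemK x hxt, hmemK y hyt, fun h => hxy (hinj h)⟩
    · rintro ⟨x1, y1⟩ - ⟨x2, y2⟩ - h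
      rw [Prod.mk.injEq] at h ⊢
      exact ⟨hinj h.1, hinj h.2⟩
    · rintro ⟨a, b⟩ hab
      rw [Finset.mem_offDiag] at hab
      obtain ⟨ha, hb, hne⟩ := hab
      obtain ⟨x, hxt, rfl⟩ := hsurjK a ha
      obtain ⟨y, hyt, rfl⟩ := hsurjK b hb
      refine ⟨(x, y), ?_, rfl⟩
      rw [Finset.mem_filter]
      exact ⟨Finset.mem_product.mpr ⟨Finset.mem_univ _, Finset.mem_univ _⟩,
        fun h => hne (congrArg φ h), hxt, hyt⟩
    · rintro ⟨x, y⟩ -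
      rfl
  exact ⟨hsum, hzero, hconnAll, hrow⟩

end SHypergraph


-- ======== more congruence lemmas ========
namespace SolAux

theorem ball5_congr {p q : Nat → Bool} (h : ∀ x < 5, p x = q x) : ball5 p = ball5 q := by
  unfold ball5
  rw [h 0 (by norm_num), h 1 (by norm_num), h 2 (by norm_num), h 3 (by norm_num),
    h 4 (by norm_num)]

theorem zeroRow_congr {A A' : Nat → Nat → Bool} {v : Nat}
    (h : ∀ x < 5, ∀ y < 5, A x y = A' x y) (hv : v < 5) : zeroRow v A = zeroRow v A' := by
  unfold zeroRow
  exact ball5_congr fun x hx => by rw [h x hx v hv]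

theorem connB_congr {A A' : Nat → Nat → Bool} {x y : Nat}
    (h : ∀ x' < 5, ∀ y' < 5, A x' y' = A' x' y') (hx : x < 5) (hy : y < 5) :
    connB A x y = connB A' x y := by
  unfold connB
  rw [h x hx y hy, cmn_congr h hx hy, h x hx 0 (by norm_num), h x hx 1 (by norm_num),
    h x hx 2 (by norm_num), h x hx 3 (by norm_num), h x hx 4 (by norm_num),
    cmn_congr h (by norm_num : (0:ℕ) < 5) hy, cmn_congr h (by norm_num : (1:ℕ) < 5) hy,
    cmn_congr h (by norm_num : (2:ℕ) < 5) hy, cmn_congr h (by norm_num : (3:ℕ) < 5) hy,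
    cmn_congr h (by norm_num : (4:ℕ) < 5) hy]

theorem connAll_congr {A A' : Nat → Nat → Bool} {v : Nat}
    (h : ∀ x < 5, ∀ y < 5, A x y = A' x y) : connAll v A = connAll v A' := by
  unfold connAll
  exact ball5_congr fun x hx => ball5_congr fun y hy => by rw [connB_congr h hx hy]

theorem triFree_congr {A A' : Nat → Nat → Bool}
    (h : ∀ x < 5, ∀ y < 5, A x y = A' x y) : triFree A = triFree A' := by
  unfold triFree
  exact ball5_congr fun x hx => ball5_congr fun y hy => ball5_congr fun z hz => by
    rw [h x hx y hy, h y hy z hz, h x hx z hz]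

end SolAux



-- cycle helper facts
lemma cyc_pair_mem : ∀ u w : Fin 5, SolAux.cycB ↑u ↑w = true →
    ({u, w} : Finset (Fin 5)) ∈ cycleFivePlus.edges := by decide

lemma cyc_succ_val : ∀ i : Fin 5, SolAux.cycB ↑i ↑(i + 1) = true := by decide

lemma univ_mem_cyc : (Finset.univ : Finset (Fin 5)) ∈ cycleFivePlus.edges := by decide

lemma fin5_ne_succ : ∀ i : Fin 5, i ≠ i + 1 := by decide

theorem stmt4 {α : Type*} [DecidableEq α] (H : SHypergraph α) (h : H.IsSoltes) :
    5 ≤ H.verts.card ∧ (H.verts.card = 5 → H.IsIsoTo cycleFivePlus) := by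
  classical
  obtain ⟨h2, hconn, hdel⟩ := h
  have hge5 : 5 ≤ H.verts.card := by
    by_contra hlt
    push_neg at hlt
    have hpos : 0 < H.verts.card := by omega
    obtain ⟨v, hv⟩ := Finset.card_pos.mp hpos
    obtain ⟨hcK, hwK⟩ := hdel v hv
    have hKcard : (H.delete v).verts.card = H.verts.card - 1 := Finset.card_erase_of_mem hv
    have hlow : H.verts.card.choose 2 ≤ H.wiener := H.wiener_lower hconn
    have hn : H.verts.card = 2 ∨ H.verts.card = 3 ∨ H.verts.card = 4 := by omega
    rcases hn with hn | hn | hn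
    · have hup : (H.delete v).wiener ≤ (H.delete v).verts.card.choose 2 * 0 :=
        (H.delete v).wiener_upper hcK 0 (by omega)
      rw [Nat.mul_zero] at hup
      rw [hn, (by decide : Nat.choose 2 2 = 1)] at hlow
      omega
    · have hup : (H.delete v).wiener ≤ (H.delete v).verts.card.choose 2 * 1 :=
        (H.delete v).wiener_upper hcK 1 (by omega)
      rw [hn, (by decide : Nat.choose 3 2 = 3)] at hlow
      rw [hKcard, hn, (by decide : Nat.choose (3 - 1) 2 * 1 = 1)] at hup
      omega
    · have hup : (H.delete v).wiener <
          (H.delete v).verts.card.choose 2 * ((H.delete v).verts.card - 1) :=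
        (H.delete v).wiener_lt hcK (by omega)
      rw [hn, (by decide : Nat.choose 4 2 = 6)] at hlow
      rw [hKcard, hn, (by decide : Nat.choose (4 - 1) 2 * (4 - 1 - 1) = 6)] at hup
      omega
  refine ⟨hge5, fun hcard => ?_⟩
  -- ============ order five ============
  obtain ⟨φ, hinj, hmem, hsurj⟩ : ∃ φ : Fin 5 → α, Function.Injective φ ∧
      (∀ i, φ i ∈ H.verts) ∧ ∀ a ∈ H.verts, ∃ i, φ i = a := by
    have e : {x // x ∈ H.verts} ≃ Fin 5 := H.verts.equivFin.trans (finCongr hcard)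
    refine ⟨fun i => (e.symm i : α), ?_, fun i => (e.symm i).2, ?_⟩
    · intro i j hij
      exact e.symm.injective (Subtype.ext hij)
    · intro a ha
      exact ⟨e ⟨a, ha⟩, by simp⟩
  choose ψ hψ using hsurj
  have hsurj2 : ∀ a ∈ H.verts, ∃ i, φ i = a := fun a ha => ⟨ψ a ha, hψ a ha⟩
  have hψφ : ∀ (x : Fin 5) (hx : φ x ∈ H.verts), ψ (φ x) hx = x := fun x hx => hinj (hψ _ hx)
  have hKc : ∀ t : Fin 5, (H.delete (φ t)).Connected := fun t => (hdel _ (hmem t)).1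
  have hKw : ∀ t : Fin 5, (H.delete (φ t)).wiener = H.wiener := fun t => (hdel _ (hmem t)).2
  have hPT := fun t : Fin 5 => H.per_t φ hinj hmem hsurj2 hcard t (hKc t)
  -- apply DEL for each t
  have hDEL : ∀ t : Fin 5,
      2 * (H.delete (φ t)).wiener ≤ 20 ∧
        (2 * (H.delete (φ t)).wiener = 20 →
          SolAux.triFree (SHypergraph.adjB (H.delete (φ t)) φ) = true) := by
    intro t
    obtain ⟨hsum, hzero, hconnA, hrow⟩ := hPT t
    set AB := SHypergraph.adjB (H.delete (φ t)) φ with hABdef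
    set T : Fin 5 → Fin 5 → Bool := fun i j => AB ↑i ↑j with hTdef
    have hTsymm : ∀ i j, T i j = T j i := fun i j => SHypergraph.adjB_symm _ _ _ _
    have hTdiag : ∀ i, T i i = false := fun i => SHypergraph.adjB_diag _ _ _
    have hMspec : ∀ x < 5, ∀ y < 5,
        SolAux.matN (T 0 1) (T 0 2) (T 0 3) (T 0 4) (T 1 2) (T 1 3) (T 1 4) (T 2 3) (T 2 4)
          (T 3 4) x y = AB x y := fun x hx y hy =>
      SolAux.matN_spec T hTsymm hTdiag ⟨x, hx⟩ ⟨y, hy⟩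
    have hd := SolAux.DEL (T 0 1) (T 0 2) (T 0 3) (T 0 4) (T 1 2) (T 1 3) (T 1 4) (T 2 3)
      (T 2 4) (T 3 4) ↑t t.isLt
      (by rw [SolAux.zeroRow_congr hMspec t.isLt]; exact hzero)
      (by rw [SolAux.connAll_congr hMspec]; exact hconnA)
    rw [SolAux.fsum_congr ↑t hMspec, hsum] at hd
    obtain ⟨hd1, hd2⟩ := hd
    exact ⟨hd1, fun he => by rw [← SolAux.triFree_congr hMspec]; exact hd2 he⟩
  -- Wiener index is exactly 10
  have hW10 : H.wiener = 10 := by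
    have hle := (hDEL 0).1
    rw [hKw 0] at hle
    have hlow : H.verts.card.choose 2 ≤ H.wiener := H.wiener_lower hconn
    rw [hcard, (by decide : Nat.choose 5 2 = 10)] at hlow
    omega
  have htri : ∀ t : Fin 5, SolAux.triFree (SHypergraph.adjB (H.delete (φ t)) φ) = true :=
    fun t => (hDEL t).2 (by rw [hKw t, hW10])
  -- every pair of vertices is adjacent
  have hadjall : ∀ a ∈ H.verts, ∀ b ∈ H.verts, a ≠ b → H.twoSection.Adj a b := by
    intro a ha b hb hne
    by_contra hnadj
    have hr := hconn a ha b hb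
    have hd1 : H.dist a b ≠ 1 := by
      intro h1
      obtain ⟨p, hp⟩ := hr.exists_walk_length_eq_dist
      exact hnadj (SHypergraph.walk_len1 p (by rw [hp]; exact h1))
    have hd0 : 1 ≤ H.dist a b := H.one_le_dist hne hr
    have hS : (H.verts.sym2.filter (fun p => ¬ p.IsDiag)).card = 10 := by
      rw [SHypergraph.card_sym2_ndiag, hcard]
      decide
    have hlt : ∑ _q ∈ H.verts.sym2.filter (fun p => ¬ p.IsDiag), 1 <
        ∑ q ∈ H.verts.sym2.filter (fun p => ¬ p.IsDiag),
          Sym2.lift ⟨fun u v => H.dist u v, fun _ _ => SimpleGraph.dist_comm⟩ q := by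
      apply Finset.sum_lt_sum
      · intro q hq
        rw [Finset.mem_filter] at hq
        obtain ⟨hq1, hq2⟩ := hq
        induction q with
        | _ x y =>
          rw [Finset.mk_mem_sym2_iff] at hq1
          rw [Sym2.mk_isDiag_iff] at hq2
          exact H.one_le_dist hq2 (hconn x hq1.1 y hq1.2)
      · refine ⟨s(a, b), ?_, ?_⟩
        · rw [Finset.mem_filter, Finset.mk_mem_sym2_iff, Sym2.mk_isDiag_iff]
          exact ⟨⟨ha, hb⟩, hne⟩
        · show 1 < H.dist a b
          omega
    rw [Finset.sum_const, smul_eq_mul, mul_one, hS] at hlt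
    have : H.wiener = 10 := hW10
    unfold SHypergraph.wiener at this
    omega
  -- every edge is a pair or the whole vertex set
  have hedge : ∀ e ∈ H.edges, e.card = 2 ∨ e = H.verts := by
    intro e he
    by_contra hcon
    push_neg at hcon
    obtain ⟨hne2, hnev⟩ := hcon
    have hsub := H.edge_sub e he
    have h3 : 2 < e.card := by have := H.edge_card e he; omega
    obtain ⟨a, ha, hae⟩ := Finset.exists_of_ssubset
      (Finset.ssubset_iff_subset_ne.mpr ⟨hsub, hnev⟩)
    obtain ⟨t, rfl⟩ := hsurj2 a ha
    obtain ⟨x, y, z, hx, hy, hz, hxy, hxz, hyz⟩ := Finset.two_lt_card_iff.mp h3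
    obtain ⟨i, rfl⟩ := hsurj2 x (hsub hx)
    obtain ⟨j, rfl⟩ := hsurj2 y (hsub hy)
    obtain ⟨k, rfl⟩ := hsurj2 z (hsub hz)
    have heK : e ∈ (H.delete (φ t)).edges := Finset.mem_filter.mpr ⟨he, hae⟩
    have a1 : (H.delete (φ t)).twoSection.Adj (φ i) (φ j) := ⟨hxy, e, heK, hx, hy⟩
    have a2 : (H.delete (φ t)).twoSection.Adj (φ j) (φ k) := ⟨hyz, e, heK, hy, hz⟩
    have a3 : (H.delete (φ t)).twoSection.Adj (φ i) (φ k) := ⟨hxz, e, heK, hx, hz⟩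
    have b1 := (SHypergraph.adjB_iff (H.delete (φ t)) φ i j).mpr a1
    have b2 := (SHypergraph.adjB_iff (H.delete (φ t)) φ j k).mpr a2
    have b3 := (SHypergraph.adjB_iff (H.delete (φ t)) φ i k).mpr a3
    have ht := htri t
    rw [SolAux.triFree, SolAux.ball5_iff] at ht
    have ht2 := ht ↑i i.isLt
    rw [SolAux.ball5_iff] at ht2
    have ht3 := ht2 ↑j j.isLt
    rw [SolAux.ball5_iff] at ht3
    have ht4 := ht3 ↑k k.isLt
    have hij : (↑i:ℕ) ≠ ↑j := fun hh => hxy (congrArg φ (Fin.val_injective hh))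
    have hjk : (↑j:ℕ) ≠ ↑k := fun hh => hyz (congrArg φ (Fin.val_injective hh))
    have hik : (↑i:ℕ) ≠ ↑k := fun hh => hxz (congrArg φ (Fin.val_injective hh))
    simp only [b1, b2, b3] at ht4
    simp [hij, hjk, hik, Ne.symm hij, Ne.symm hjk, Ne.symm hik] at ht4
  -- the pair matrix and D5
  set TQ : Fin 5 → Fin 5 → Bool := fun x y => SHypergraph.pairB H φ ↑x ↑y with hTQdef
  have hTQsymm : ∀ i j, TQ i j = TQ j i := fun i j => SHypergraph.pairB_symm _ _ _ _
  have hTQdiag : ∀ i, TQ i i = false := fun i => SHypergraph.pairB_diag _ _ _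
  have hQspec : ∀ x < 5, ∀ y < 5,
      SolAux.matN (TQ 0 1) (TQ 0 2) (TQ 0 3) (TQ 0 4) (TQ 1 2) (TQ 1 3) (TQ 1 4) (TQ 2 3)
        (TQ 2 4) (TQ 3 4) x y = SHypergraph.pairB H φ x y := fun x hx y hy =>
    SolAux.matN_spec TQ hTQsymm hTQdiag ⟨x, hx⟩ ⟨y, hy⟩
  -- pairB equals adjB of the deleted hypergraph away from t
  have hbridge : ∀ (t : Fin 5) (x y : Nat), x < 5 → y < 5 → x ≠ ↑t → y ≠ ↑t →
      SHypergraph.pairB H φ x y = SHypergraph.adjB (H.delete (φ t)) φ x y := by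
    intro t x y hx hy hxt hyt
    apply SHypergraph.bool_eq_of_iff
    rw [SHypergraph.pairB_iff' H φ hx hy, SHypergraph.adjB_iff' (H.delete (φ t)) φ hx hy]
    constructor
    · rintro ⟨hp, hxy⟩
      have hXY : φ (⟨x, hx⟩ : Fin 5) ≠ φ ⟨y, hy⟩ := by
        intro hh
        exact hxy (congrArg Fin.val (hinj hh))
      have hnt : φ t ∉ ({φ (⟨x, hx⟩ : Fin 5), φ ⟨y, hy⟩} : Finset α) := by
        intro hh
        rcases Finset.mem_insert.mp hh with hh | hh
        · exact hxt (congrArg Fin.val (hinj hh)).symm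
        · exact hyt (congrArg Fin.val (hinj (Finset.mem_singleton.mp hh))).symm
      exact ⟨hXY, {φ ⟨x, hx⟩, φ ⟨y, hy⟩}, Finset.mem_filter.mpr ⟨hp, hnt⟩,
        Finset.mem_insert_self _ _, Finset.mem_insert_of_mem (Finset.mem_singleton_self _)⟩
    · rintro ⟨hne, e, heK, hmx, hmy⟩
      obtain ⟨heH, hnt⟩ := Finset.mem_filter.mp heK
      have hxy : x ≠ y := by
        intro hh
        apply hne
        congr 1
        exact Fin.val_injective hh
      rcases hedge e heH with hc2 | rfl
      · have hpsub : ({φ (⟨x, hx⟩ : Fin 5), φ ⟨y, hy⟩} : Finset α) ⊆ e :=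
          Finset.insert_subset hmx (Finset.singleton_subset_iff.mpr hmy)
        have hpc : ({φ (⟨x, hx⟩ : Fin 5), φ ⟨y, hy⟩} : Finset α).card = 2 :=
          Finset.card_pair hne
        have := Finset.eq_of_subset_of_card_le hpsub (by omega)
        rw [this]
        exact ⟨heH, hxy⟩
      · exact absurd (hmem t) hnt
  -- D5 hypothesis
  have hD5hyp : ∀ v < 5, SolAux.fsumN v (SolAux.delN v
      (SolAux.matN (TQ 0 1) (TQ 0 2) (TQ 0 3) (TQ 0 4) (TQ 1 2) (TQ 1 3) (TQ 1 4) (TQ 2 3)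
        (TQ 2 4) (TQ 3 4))) = 20 := by
    intro v hv
    set t : Fin 5 := ⟨v, hv⟩ with htdef
    have htv : (↑t : ℕ) = v := rfl
    obtain ⟨hsum, hzero, hconnA, hrow⟩ := hPT t
    have hcol : ∀ y < 5, SHypergraph.adjB (H.delete (φ t)) φ y ↑t = false := by
      intro y hy
      rw [SHypergraph.adjB_symm]
      exact hrow y hy
    have hkey : ∀ x < 5, ∀ y < 5, SolAux.delN v
        (SolAux.matN (TQ 0 1) (TQ 0 2) (TQ 0 3) (TQ 0 4) (TQ 1 2) (TQ 1 3) (TQ 1 4) (TQ 2 3)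
          (TQ 2 4) (TQ 3 4)) x y = SHypergraph.adjB (H.delete (φ t)) φ x y := by
      intro x hx y hy
      by_cases hxt : x = v
      · simp only [SolAux.delN]
        rw [if_pos (by simp [hxt])]
        rw [hxt, ← htv]
        exact (hrow y hy).symm
      · by_cases hyt : y = v
        · simp only [SolAux.delN]
          rw [if_pos (by simp [hyt])]
          rw [hyt, ← htv]
          exact (hcol x hx).symm
        · simp only [SolAux.delN]
          rw [if_neg (by simp [hxt, hyt])]
          rw [hQspec x hx y hy]
          exact hbridge t x y hx hy (by rwa [htv]) (by rwa [htv])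
    rw [SolAux.fsum_congr v hkey]
    have : SolAux.fsumN v (SHypergraph.adjB (H.delete (φ t)) φ) =
        SolAux.fsumN ↑t (SHypergraph.adjB (H.delete (φ t)) φ) := by rw [htv]
    rw [this, hsum, hKw t, hW10]
  obtain ⟨p0, hp0, p1, hp1, p2, hp2, p3, hp3, p4, hp4, hlookinj, hiff⟩ :=
    SolAux.D5 (TQ 0 1) (TQ 0 2) (TQ 0 3) (TQ 0 4) (TQ 1 2) (TQ 1 3) (TQ 1 4) (TQ 2 3)
      (TQ 2 4) (TQ 3 4) hD5hyp
  -- build the isomorphism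
  have hlt5 : ∀ x : Nat, SolAux.look p0 p1 p2 p3 p4 x < 5 :=
    SolAux.look_lt hp0 hp1 hp2 hp3 hp4
  set σ : Fin 5 → Fin 5 := fun x => ⟨SolAux.look p0 p1 p2 p3 p4 ↑x, hlt5 ↑x⟩ with hσdef
  have hσval : ∀ x : Fin 5, (σ x : ℕ) = SolAux.look p0 p1 p2 p3 p4 ↑x := fun x => rfl
  have hσinj : Function.Injective σ := by
    intro x y hxy
    by_contra hne
    exact hlookinj ↑x x.isLt ↑y y.isLt (fun hh => hne (Fin.val_injective hh))
      (congrArg Fin.val hxy)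
  have hσsurj : Function.Surjective σ := Finite.surjective_of_injective hσinj
  set f : α → Fin 5 := fun a => if h : a ∈ H.verts then σ (ψ a h) else σ 0 with hfdef
  have hfφ : ∀ x : Fin 5, f (φ x) = σ x := fun x => by
    rw [hfdef]
    simp only
    rw [dif_pos (hmem x), hψφ x (hmem x)]
  have hInj : Set.InjOn f ↑H.verts := by
    intro a ha b hb hfe
    have ha' : a ∈ H.verts := ha
    have hb' : b ∈ H.verts := hb
    rw [hfdef] at hfe
    simp only at hfe
    rw [dif_pos ha', dif_pos hb'] at hfe
    have := hσinj hfe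
    rw [← hψ a ha', ← hψ b hb', this]
  have himg : H.verts.image f = Finset.univ := by
    apply Finset.eq_univ_of_card
    rw [Finset.card_image_of_injOn hInj, hcard, Fintype.card_fin]
  -- Qm-value lemma for Fin arguments
  have hQm : ∀ x y : Fin 5, x ≠ y →
      ((({φ x, φ y} : Finset α) ∈ H.edges) ↔
        SolAux.cycB ↑(σ x) ↑(σ y) = true) := by
    intro x y hxy
    have h1 := hiff ↑x x.isLt ↑y y.isLt
    rw [hQspec ↑x x.isLt ↑y y.isLt] at h1
    have h2 : SHypergraph.pairB H φ ↑x ↑y = true ↔ (({φ x, φ y} : Finset α) ∈ H.edges) := by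
      rw [SHypergraph.pairB_iff' H φ x.isLt y.isLt]
      constructor
      · intro hh
        exact hh.1
      · intro hh
        exact ⟨hh, fun hc => hxy (Fin.val_injective hc)⟩
    rw [h2] at h1
    exact h1
  -- the whole vertex set is an edge
  have hvertsedge : H.verts ∈ H.edges := by
    obtain ⟨x, hx⟩ := hσsurj 0
    obtain ⟨y, hy⟩ := hσsurj 2
    have hxy : x ≠ y := by
      intro hh
      rw [hh, hy] at hx
      exact absurd hx (by decide)
    have hφxy : φ x ≠ φ y := fun hh => hxy (hinj hh)
    obtain ⟨-, e, he, hmx, hmy⟩ := hadjall (φ x) (hmem x) (φ y) (hmem y) hφxy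
    rcases hedge e he with hc2 | rfl
    · exfalso
      have hpsub : ({φ x, φ y} : Finset α) ⊆ e :=
        Finset.insert_subset hmx (Finset.singleton_subset_iff.mpr hmy)
      have hpc : ({φ x, φ y} : Finset α).card = 2 := Finset.card_pair hφxy
      have hee := Finset.eq_of_subset_of_card_le hpsub (by omega)
      rw [← hee] at he
      have := (hQm x y hxy).mp he
      rw [hx, hy] at this
      exact absurd this (by decide)
    · exact he
  -- edge set equality
  have hedges : cycleFivePlus.edges = H.edges.image (fun e => e.image f) := by
    apply Finset.Subset.antisymm
    · intro E hE
      have hE' : E ∈ (Finset.univ.image fun i : Fin 5 => ({i, i + 1} : Finset (Fin 5)))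
          ∪ {Finset.univ} := hE
      rcases Finset.mem_union.mp hE' with hE | hE
      · obtain ⟨i, -, rfl⟩ := Finset.mem_image.mp hE
        obtain ⟨x, hx⟩ := hσsurj i
        obtain ⟨y, hy⟩ := hσsurj (i + 1)
        have hxy : x ≠ y := by
          intro hh
          rw [hh, hy] at hx
          exact fin5_ne_succ i hx.symm
        have hcyc : SolAux.cycB ↑(σ x) ↑(σ y) = true := by
          rw [hx, hy]
          exact cyc_succ_val i
        have hp := (hQm x y hxy).mpr hcyc
        refine Finset.mem_image.mpr ⟨{φ x, φ y}, hp, ?_⟩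
        rw [Finset.image_insert, Finset.image_singleton, hfφ, hfφ, hx, hy]
      · rw [Finset.mem_singleton.mp hE]
        exact Finset.mem_image.mpr ⟨H.verts, hvertsedge, himg⟩
    · intro E hE
      obtain ⟨e, he, rfl⟩ := Finset.mem_image.mp hE
      rcases hedge e he with hc2 | rfl
      · obtain ⟨a, b, hab, rfl⟩ := Finset.card_eq_two.mp hc2
        have ha : a ∈ H.verts := H.edge_sub _ he (Finset.mem_insert_self _ _)
        have hb : b ∈ H.verts :=
          H.edge_sub _ he (Finset.mem_insert_of_mem (Finset.mem_singleton_self _))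
        have hpair : ({φ (ψ a ha), φ (ψ b hb)} : Finset α) ∈ H.edges := by
          rw [hψ a ha, hψ b hb]
          exact he
        have hψne : ψ a ha ≠ ψ b hb := by
          intro hh
          apply hab
          rw [← hψ a ha, ← hψ b hb, hh]
        have hcyc := (hQm _ _ hψne).mp hpair
        have hfab : ({a, b} : Finset α).image f = {σ (ψ a ha), σ (ψ b hb)} := by
          rw [Finset.image_insert, Finset.image_singleton, hfdef]
          simp only
          rw [dif_pos ha, dif_pos hb]
        rw [hfab]
        exact cyc_pair_mem _ _ hcyc
      · rw [himg]
        exact univ_mem_cyc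
  exact ⟨f, hInj, himg.symm, hedges⟩
end

section
/- There is no 3-uniform Šoltés hypergraph of diameter 1; that is, no 3-uniform Šoltés hypergraph has the property that every two distinct vertices lie in a common edge. -/
variable {α : Type*} {β : Type*}

/-- A hypergraph: a finite vertex set together with a set of edges,
each an at-least-2-element subset of the vertex set. -/
structure FinHypergraph (α : Type*) where
  verts : Finset α
  edges : Finset (Finset α)
  edge_sub : ∀ e ∈ edges, e ⊆ verts
  edge_card : ∀ e ∈ edges, 2 ≤ e.card

namespace FinHypergraph

/-- The 2-section graph of a hypergraph: two distinct vertices are adjacent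
iff some edge contains both. -/
def twoSection (H : FinHypergraph α) : SimpleGraph α where
  Adj u v := u ≠ v ∧ ∃ e ∈ H.edges, u ∈ e ∧ v ∈ e
  symm := by
    constructor
    rintro u v ⟨huv, e, he, hu, hv⟩
    exact ⟨huv.symm, e, he, hv, hu⟩
  loopless := by
    constructor
    rintro u ⟨h, -⟩
    exact h rfl

/-- Distance between two vertices: graph distance in the 2-section. -/
noncomputable def dist (H : FinHypergraph α) (u v : α) : ℕ :=
  H.twoSection.dist u v

/-- A hypergraph is connected if every two of its vertices are joined by a path. -/
def Connected (H : FinHypergraph α) : Prop :=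
  ∀ u ∈ H.verts, ∀ v ∈ H.verts, H.twoSection.Reachable u v

/-- The Wiener index (total distance): the sum of distances over all
unordered pairs of distinct vertices. -/
noncomputable def wiener [DecidableEq α] (H : FinHypergraph α) : ℕ :=
  ∑ p ∈ H.verts.sym2.filter (fun p => ¬ p.IsDiag),
    Sym2.lift ⟨fun u v => H.dist u v, fun _ _ => SimpleGraph.dist_comm⟩ p

/-- Vertex deletion: remove the vertex and all edges containing it. -/
def delete [DecidableEq α] (H : FinHypergraph α) (v : α) : FinHypergraph α where
  verts := H.verts.erase v
  edges := H.edges.filter fun e => v ∉ e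
  edge_sub := by
    intro e he x hx
    rw [Finset.mem_filter] at he
    exact Finset.mem_erase.mpr ⟨fun h => he.2 (h ▸ hx), H.edge_sub e he.1 hx⟩
  edge_card := fun e he => H.edge_card e (Finset.mem_filter.mp he).1

/-- A Šoltés hypergraph: a connected hypergraph on at least 2 vertices such that
deleting any vertex leaves a connected hypergraph with the same Wiener index. -/
def IsSoltes [DecidableEq α] (H : FinHypergraph α) : Prop :=
  2 ≤ H.verts.card ∧ H.Connected ∧
    ∀ v ∈ H.verts, (H.delete v).Connected ∧ (H.delete v).wiener = H.wiener

/-- The diameter: the maximum distance over unordered pairs of distinct vertices. -/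
noncomputable def diam [DecidableEq α] (H : FinHypergraph α) : ℕ :=
  H.verts.offDiag.sup fun p => H.dist p.1 p.2

/-- The degree of a vertex: the number of edges containing it. -/
def degree [DecidableEq α] (H : FinHypergraph α) (v : α) : ℕ :=
  (H.edges.filter fun e => v ∈ e).card

/-- FinHypergraph isomorphism: a bijection between the vertex sets mapping
edges onto edges. -/
def IsIsoTo [DecidableEq β] (H : FinHypergraph α) (H' : FinHypergraph β) : Prop :=
  ∃ f : α → β, Set.InjOn f ↑H.verts ∧ H'.verts = H.verts.image f ∧
    H'.edges = H.edges.image fun e => e.image f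

end FinHypergraph

lemma card_sym2_diag [DecidableEq α] (s : Finset α) :
    (s.sym2.filter fun p => p.IsDiag).card = s.card := by
  symm
  apply Finset.card_bij (fun (a : α) _ => s(a, a))
  · intro a ha
    simp [Finset.mk_mem_sym2_iff, ha]
  · intro a _ b _ h
    simpa using h
  · rintro p hp
    simp only [Finset.mem_filter] at hp
    induction p with
    | _ x y =>
      obtain ⟨hmem, hdiag⟩ := hp
      rw [Sym2.mk_isDiag_iff] at hdiag
      subst hdiag
      exact ⟨x, (Finset.mk_mem_sym2_iff.mp hmem).1, rfl⟩

lemma card_sym2_offdiag [DecidableEq α] (s : Finset α) :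
    (s.sym2.filter fun p => ¬ p.IsDiag).card = s.card.choose 2 := by
  have h1 := Finset.card_filter_add_card_filter_not (s := s.sym2)
    (p := fun p => p.IsDiag)
  rw [card_sym2_diag, Finset.card_sym2] at h1
  have h2 : (s.card + 1).choose 2 = s.card + s.card.choose 2 := by
    rw [Nat.choose_succ_succ, Nat.choose_one_right]
  omega

theorem stmt9 {α : Type*} [DecidableEq α] (H : FinHypergraph α)
    (h : H.IsSoltes) (h3 : ∀ e ∈ H.edges, e.card = 3) :
    ¬ ∀ u ∈ H.verts, ∀ v ∈ H.verts, u ≠ v → ∃ e ∈ H.edges, u ∈ e ∧ v ∈ e := by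
  intro hyp
  obtain ⟨hcard2, hconn, hdel⟩ := h
  -- n ≥ 3
  have hn3 : 3 ≤ H.verts.card := by
    obtain ⟨a, ha, b, hb, hab⟩ := Finset.one_lt_card.mp (by omega : 1 < H.verts.card)
    obtain ⟨e, he, hae, hbe⟩ := hyp a ha b hb hab
    calc 3 = e.card := (h3 e he).symm
    _ ≤ H.verts.card := Finset.card_le_card (H.edge_sub e he)
  -- case n = 3 : deleting a vertex kills all edges, contradicting connectivity
  by_cases hn : H.verts.card = 3
  · obtain ⟨u, hu⟩ : H.verts.Nonempty := Finset.card_pos.mp (by omega)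
    have hcv := (hdel u hu).1
    obtain ⟨w1, hw1, w2, hw2, hne⟩ := Finset.one_lt_card.mp
      (by show 1 < (H.verts.erase u).card
          rw [Finset.card_erase_of_mem hu]; omega :
        1 < ((H.delete u).verts).card)
    have hnoadj : ∀ x y : α, ¬ (H.delete u).twoSection.Adj x y := by
      rintro x y ⟨hxy, e, he, hx, hy⟩
      rw [FinHypergraph.delete] at he
      simp only [Finset.mem_filter] at he
      have : e = H.verts := Finset.eq_of_subset_of_card_le (H.edge_sub e he.1)
        (by rw [h3 e he.1]; omega)
      exact he.2 (this ▸ hu)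
    have hreach := hcv w1 hw1 w2 hw2
    have : (⊥ : SimpleGraph α).Reachable w1 w2 :=
      hreach.mono (fun x y hxy => absurd hxy (hnoadj x y))
    exact hne (SimpleGraph.reachable_bot.mp this)
  have hn4 : 4 ≤ H.verts.card := by omega
  -- notation
  set D : FinHypergraph α → Sym2 α → ℕ :=
    fun K p => Sym2.lift ⟨fun u v => K.dist u v, fun _ _ => SimpleGraph.dist_comm⟩ p with hD
  set P : Finset (Sym2 α) := H.verts.sym2.filter (fun p => ¬ p.IsDiag) with hP
  -- Wiener index of H
  have wH : H.wiener = H.verts.card.choose 2 := by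
    rw [← card_sym2_offdiag H.verts]
    show (∑ p ∈ P, D H p) = P.card
    rw [Finset.card_eq_sum_ones]
    apply Finset.sum_congr rfl
    intro p hp
    induction p with
    | _ x y =>
      rw [hP, Finset.mem_filter, Finset.mk_mem_sym2_iff, Sym2.mk_isDiag_iff] at hp
      obtain ⟨⟨hx, hy⟩, hxy⟩ := hp
      show H.twoSection.dist x y = 1
      exact SimpleGraph.dist_eq_one_iff_adj.mpr ⟨hxy, hyp x hx y hy hxy⟩
  -- the family of "private pairs"
  set X : α → Finset (Sym2 α) := fun v =>
    ((H.verts.erase v).sym2.filter fun p => ¬ p.IsDiag).filter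
      (fun p => D (H.delete v) p ≠ 1) with hX
  have hXsub : ∀ v, X v ⊆ P := by
    intro v
    refine (Finset.filter_subset _ _).trans ?_
    exact Finset.filter_subset_filter _ (Finset.sym2_mono (Finset.erase_subset v H.verts))
  -- key cardinality bound
  have key : ∀ v ∈ H.verts, H.verts.card - 2 ≤ (X v).card := by
    intro v hv
    have hw : (∑ p ∈ (H.verts.erase v).sym2.filter (fun p => ¬ p.IsDiag),
        D (H.delete v) p) = H.verts.card.choose 2 := by
      rw [← wH]; exact (hdel v hv).2
    have dist2 : ∀ p ∈ X v, 2 ≤ D (H.delete v) p := by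
      intro p hp
      rw [hX, Finset.mem_filter, Finset.mem_filter] at hp
      obtain ⟨⟨hmem, hdiag⟩, hne1⟩ := hp
      induction p with
      | _ x y =>
        rw [Finset.mk_mem_sym2_iff] at hmem
        rw [Sym2.mk_isDiag_iff] at hdiag
        have hr := (hdel v hv).1 x hmem.1 y hmem.2
        have := hr.pos_dist_of_ne hdiag
        show 2 ≤ (H.delete v).twoSection.dist x y
        have hne1' : (H.delete v).twoSection.dist x y ≠ 1 := hne1
        omega
    by_cases hc : ∀ p ∈ X v, D (H.delete v) p = 2
    · -- all private distances are 2: |X v| = n - 1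
      have hsplit := Finset.sum_filter_add_sum_filter_not
        ((H.verts.erase v).sym2.filter fun p => ¬ p.IsDiag)
        (fun p => D (H.delete v) p ≠ 1) (D (H.delete v))
      have h1 : (∑ p ∈ X v, D (H.delete v) p) = 2 * (X v).card := by
        rw [Finset.sum_congr rfl hc]
        simp [mul_comm]
      have h2 : (∑ p ∈ ((H.verts.erase v).sym2.filter fun p => ¬ p.IsDiag).filter
          (fun p => ¬ D (H.delete v) p ≠ 1), D (H.delete v) p) =
          (((H.verts.erase v).sym2.filter fun p => ¬ p.IsDiag).filter
          (fun p => ¬ D (H.delete v) p ≠ 1)).card := by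
        rw [Finset.card_eq_sum_ones]
        apply Finset.sum_congr rfl
        intro p hp
        rw [Finset.mem_filter, not_not] at hp
        exact hp.2
      have hcards := Finset.card_filter_add_card_filter_not
        (s := (H.verts.erase v).sym2.filter fun p => ¬ p.IsDiag)
        (p := fun p => D (H.delete v) p ≠ 1)
      rw [card_sym2_offdiag, Finset.card_erase_of_mem hv] at hcards
      have hchoose : H.verts.card.choose 2 =
          (H.verts.card - 1).choose 2 + (H.verts.card - 1) := by
        obtain ⟨m, hm⟩ : ∃ m, H.verts.card = m + 1 := ⟨H.verts.card - 1, by omega⟩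
        rw [hm]
        simp [Nat.choose_succ_succ, Nat.choose_one_right]
        omega
      have hXv : (X v).card = (((H.verts.erase v).sym2.filter fun p => ¬ p.IsDiag).filter
          (fun p => D (H.delete v) p ≠ 1)).card := by rw [hX]
      rw [h1, h2, hw] at hsplit
      omega
    · -- some private pair at distance ≥ 3
      push_neg at hc
      obtain ⟨p₀, hp₀X, hp₀⟩ := hc
      have hp₀3 : 3 ≤ D (H.delete v) p₀ := by
        have := dist2 p₀ hp₀X
        omega
      clear hp₀
      revert hp₀X hp₀3
      induction p₀ with
      | _ u w =>
        intro hp₀X hp₀3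
        have hmem : u ∈ H.verts.erase v ∧ w ∈ H.verts.erase v ∧ u ≠ w := by
          rw [hX, Finset.mem_filter, Finset.mem_filter, Finset.mk_mem_sym2_iff,
            Sym2.mk_isDiag_iff] at hp₀X
          exact ⟨hp₀X.1.1.1, hp₀X.1.1.2, hp₀X.1.2⟩
        obtain ⟨huv, hwv, huw⟩ := hmem
        have hd3 : 3 ≤ (H.delete v).twoSection.dist u w := hp₀3
        -- every other vertex is "privately" tied to u or w
        have hnc : ∀ x ∈ H.verts.erase v, x ≠ u → x ≠ w →
            (s(u, x) ∈ X v ∨ s(w, x) ∈ X v) := by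
          intro x hx hxu hxw
          by_contra hcon
          push_neg at hcon
          have hmemux : s(u, x) ∈ (H.verts.erase v).sym2.filter
              (fun p => ¬ p.IsDiag) := by
            rw [Finset.mem_filter, Finset.mk_mem_sym2_iff, Sym2.mk_isDiag_iff]
            exact ⟨⟨huv, hx⟩, fun h => hxu h.symm⟩
          have hmemwx : s(w, x) ∈ (H.verts.erase v).sym2.filter
              (fun p => ¬ p.IsDiag) := by
            rw [Finset.mem_filter, Finset.mk_mem_sym2_iff, Sym2.mk_isDiag_iff]
            exact ⟨⟨hwv, hx⟩, fun h => hxw h.symm⟩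
          have hadjux : (H.delete v).twoSection.Adj u x := by
            have h1 : ¬ (s(u, x) ∈ X v) := hcon.1
            rw [hX, Finset.mem_filter] at h1
            push_neg at h1
            exact SimpleGraph.dist_eq_one_iff_adj.mp (h1 hmemux)
          have hadjwx : (H.delete v).twoSection.Adj w x := by
            have h1 : ¬ (s(w, x) ∈ X v) := hcon.2
            rw [hX, Finset.mem_filter] at h1
            push_neg at h1
            exact SimpleGraph.dist_eq_one_iff_adj.mp (h1 hmemwx)
          have : (H.delete v).twoSection.dist u w ≤ 2 := by
            have := SimpleGraph.dist_le (hadjux.toWalk.append hadjwx.symm.toWalk)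
            simpa using this
          omega
        -- injection from the other vertices
        set T : Finset α := (H.verts.erase v).erase u |>.erase w with hT
        have hTcard : T.card = H.verts.card - 3 := by
          rw [hT, Finset.card_erase_of_mem, Finset.card_erase_of_mem huv,
            Finset.card_erase_of_mem hv]
          · omega
          · exact Finset.mem_erase.mpr ⟨fun h => huw h.symm, hwv⟩
        set g : α → Sym2 α := fun x =>
          if s(u, x) ∈ X v then s(u, x) else s(w, x) with hg
        have hmaps : ∀ x ∈ T, g x ∈ (X v).erase (s(u, w)) := by
          intro x hx
          rw [hT, Finset.mem_erase, Finset.mem_erase] at hx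
          obtain ⟨hxw, hxu, hxV⟩ := hx
          rw [Finset.mem_erase]
          simp only [hg]
          split_ifs with h1
          · constructor
            · intro hcontra
              rcases Sym2.eq_iff.mp hcontra with ⟨_, hb⟩ | ⟨ha, _⟩
              · exact hxw hb
              · exact huw ha
            · exact h1
          · constructor
            · intro hcontra
              rcases Sym2.eq_iff.mp hcontra with ⟨ha, _⟩ | ⟨_, hb⟩
              · exact huw ha.symm
              · exact hxu hb
            · rcases hnc x hxV hxu hxw with h | h
              · exact absurd h h1
              · exact h
        have hinj : Set.InjOn g T := by
          intro x hx y hy hxy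
          have hxT : x ∈ T := Finset.mem_coe.mp hx
          have hyT : y ∈ T := Finset.mem_coe.mp hy
          rw [hT, Finset.mem_erase, Finset.mem_erase] at hxT hyT
          obtain ⟨hxw, hxu, _⟩ := hxT
          obtain ⟨hyw, hyu, _⟩ := hyT
          simp only [hg] at hxy
          split_ifs at hxy with h1 h2 h2 <;> rw [Sym2.eq_iff] at hxy <;>
            rcases hxy with ⟨ha, hb⟩ | ⟨ha, hb⟩ <;> first
              | exact hb
              | exact absurd ha huw
              | exact absurd ha.symm hyu
              | exact absurd hb hxu
              | exact absurd hb hxw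
        have hcardle : T.card ≤ ((X v).erase (s(u, w))).card :=
          Finset.card_le_card_of_injOn g hmaps hinj
        have h1 : s(u, w) ∈ X v := hp₀X
        have h2 : ((X v).erase (s(u, w))).card = (X v).card - 1 :=
          Finset.card_erase_of_mem h1
        have h3 : 1 ≤ (X v).card := Finset.card_pos.mpr ⟨_, h1⟩
        omega
  -- disjointness of the private-pair families
  have hdisj : ∀ v ∈ H.verts, ∀ v' ∈ H.verts, v ≠ v' → Disjoint (X v) (X v') := by
    intro v hv v' hv' hvv'
    rw [Finset.disjoint_left]
    intro p hpv hpv'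
    revert hpv hpv'
    induction p with
    | _ u w =>
      intro hpv hpv'
      rw [hX, Finset.mem_filter, Finset.mem_filter, Finset.mk_mem_sym2_iff,
        Sym2.mk_isDiag_iff] at hpv hpv'
      obtain ⟨⟨⟨huv, hwv⟩, huw⟩, hd⟩ := hpv
      obtain ⟨⟨⟨huv', hwv'⟩, _⟩, hd'⟩ := hpv'
      have hu : u ∈ H.verts := Finset.mem_of_mem_erase huv
      have hw : w ∈ H.verts := Finset.mem_of_mem_erase hwv
      obtain ⟨e, he, hue, hwe⟩ := hyp u hu w hw huw
      have hve : v ∈ e := by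
        by_contra hne
        have : (H.delete v).twoSection.Adj u w :=
          ⟨huw, e, Finset.mem_filter.mpr ⟨he, hne⟩, hue, hwe⟩
        exact hd (SimpleGraph.dist_eq_one_iff_adj.mpr this)
      have hve' : v' ∈ e := by
        by_contra hne
        have : (H.delete v').twoSection.Adj u w :=
          ⟨huw, e, Finset.mem_filter.mpr ⟨he, hne⟩, hue, hwe⟩
        exact hd' (SimpleGraph.dist_eq_one_iff_adj.mpr this)
      -- e contains 4 distinct elements but has card 3
      have hvu : v ≠ u := fun h => (Finset.mem_erase.mp huv).1 h.symm
      have hvw : v ≠ w := fun h => (Finset.mem_erase.mp hwv).1 h.symm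
      have hv'u : v' ≠ u := fun h => (Finset.mem_erase.mp huv').1 h.symm
      have hv'w : v' ≠ w := fun h => (Finset.mem_erase.mp hwv').1 h.symm
      have hsub : ({v, v', u, w} : Finset α) ⊆ e := by
        intro x hx
        simp only [Finset.mem_insert, Finset.mem_singleton] at hx
        rcases hx with rfl | rfl | rfl | rfl
        exacts [hve, hve', hue, hwe]
      have hc4 : ({v, v', u, w} : Finset α).card = 4 := by
        rw [Finset.card_insert_of_notMem (by simp [hvv', hvu, hvw]),
          Finset.card_insert_of_notMem (by simp [hv'u, hv'w]),
          Finset.card_insert_of_notMem (by simp [huw]),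
          Finset.card_singleton]
      have := Finset.card_le_card hsub
      rw [hc4, h3 e he] at this
      omega
  -- final counting contradiction
  have hsum : (∑ v ∈ H.verts, (X v).card) = (H.verts.biUnion X).card :=
    (Finset.card_biUnion hdisj).symm
  have hle : (H.verts.biUnion X).card ≤ P.card :=
    Finset.card_le_card (Finset.biUnion_subset.mpr fun v _ => hXsub v)
  have hlb : H.verts.card * (H.verts.card - 2) ≤ ∑ v ∈ H.verts, (X v).card := by
    calc H.verts.card * (H.verts.card - 2)
        = ∑ _v ∈ H.verts, (H.verts.card - 2) := by rw [Finset.sum_const, smul_eq_mul]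
      _ ≤ ∑ v ∈ H.verts, (X v).card := Finset.sum_le_sum key
  have hPcard : P.card = H.verts.card.choose 2 := card_sym2_offdiag H.verts
  have hfinal : H.verts.card * (H.verts.card - 2) ≤ H.verts.card.choose 2 := by
    omega
  rw [Nat.choose_two_right] at hfinal
  have h2div : H.verts.card * (H.verts.card - 1) / 2 * 2 ≤
      H.verts.card * (H.verts.card - 1) := Nat.div_mul_le_self _ _
  have hkey : 2 * (H.verts.card * (H.verts.card - 2)) ≤
      H.verts.card * (H.verts.card - 1) := by omega
  obtain ⟨k, hk⟩ : ∃ k, H.verts.card = k + 4 := ⟨H.verts.card - 4, by omega⟩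
  rw [hk] at hkey
  have e1 : k + 4 - 2 = k + 2 := by omega
  have e2 : k + 4 - 1 = k + 3 := by omega
  rw [e1, e2] at hkey
  nlinarith
end

section
/- Let H be a 4-uniform Šoltés hypergraph such that H has diameter 1 and H \ v has diameter 2 for every vertex v of H. Then every pair of distinct vertices of H is contained in exactly one edge of H, i.e., H is a Steiner system S(2,4,n) where n is the order of H. -/
variable {α : Type*} {β : Type*}

section Aux
variable {α : Type*} [DecidableEq α]

private lemma soltes_dist_one (H : FinHypergraph α) (h : H.IsSoltes) (hd1 : H.diam = 1)
    {u w : α} (hu : u ∈ H.verts) (hw : w ∈ H.verts) (huw : u ≠ w) :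
    H.dist u w = 1 := by
  have hle : H.dist u w ≤ 1 := by
    rw [← hd1, FinHypergraph.diam]
    exact Finset.le_sup (f := fun p => H.dist p.1 p.2) (b := (u, w))
      (Finset.mem_offDiag.mpr ⟨hu, hw, huw⟩)
  have hpos : 0 < H.dist u w := (h.2.1 u hu w hw).pos_dist_of_ne huw
  omega

private lemma soltes_cover (H : FinHypergraph α) (h : H.IsSoltes) (hd1 : H.diam = 1)
    {u w : α} (hu : u ∈ H.verts) (hw : w ∈ H.verts) (huw : u ≠ w) :
    ∃ e ∈ H.edges, u ∈ e ∧ w ∈ e := by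
  have := soltes_dist_one H h hd1 hu hw huw
  rw [FinHypergraph.dist, SimpleGraph.dist_eq_one_iff_adj] at this
  exact this.2

private lemma soltes_delete_dist (H : FinHypergraph α) (h : H.IsSoltes)
    (hd2 : ∀ v ∈ H.verts, (H.delete v).diam = 2)
    {v u w : α} (hv : v ∈ H.verts) (hu : u ∈ H.verts.erase v) (hw : w ∈ H.verts.erase v)
    (huw : u ≠ w) :
    (H.delete v).dist u w = 1 + if (∀ e ∈ H.edges, u ∈ e → w ∈ e → v ∈ e) then 1 else 0 := by
  have hle : (H.delete v).dist u w ≤ 2 := by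
    rw [← hd2 v hv, FinHypergraph.diam]
    exact Finset.le_sup (f := fun p => (H.delete v).dist p.1 p.2) (b := (u, w))
      (Finset.mem_offDiag.mpr ⟨hu, hw, huw⟩)
  have hpos : 0 < (H.delete v).dist u w := ((h.2.2 v hv).1 u hu w hw).pos_dist_of_ne huw
  have hadj : (H.delete v).twoSection.Adj u w ↔ ¬ (∀ e ∈ H.edges, u ∈ e → w ∈ e → v ∈ e) := by
    constructor
    · rintro ⟨-, e, he, hue, hwe⟩ hall
      rw [FinHypergraph.delete] at he
      simp only [Finset.mem_filter] at he
      exact he.2 (hall e he.1 hue hwe)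
    · intro hnall
      push_neg at hnall
      obtain ⟨e, he, hue, hwe, hve⟩ := hnall
      exact ⟨huw, e, Finset.mem_filter.mpr ⟨he, hve⟩, hue, hwe⟩
  rw [FinHypergraph.dist] at *
  split_ifs with hc
  · have h1 : (H.delete v).twoSection.dist u w ≠ 1 := fun h1 =>
      (hadj.mp (SimpleGraph.dist_eq_one_iff_adj.mp h1)) hc
    omega
  · simpa using SimpleGraph.dist_eq_one_iff_adj.mpr (hadj.mpr hc)

end Aux
section Aux2
variable {α : Type*} [DecidableEq α]

omit [DecidableEq α] in
private lemma sym2_cover_iff {a b : α} {e : Finset α} :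
    (∀ y ∈ (s(a, b) : Sym2 α), y ∈ e) ↔ a ∈ e ∧ b ∈ e := by
  constructor
  · intro hy
    exact ⟨hy a (Sym2.mem_mk_left a b), hy b (Sym2.mem_mk_right a b)⟩
  · rintro ⟨ha, hb⟩ y hy
    rcases Sym2.mem_iff.mp hy with rfl | rfl <;> assumption

private lemma wiener_H (H : FinHypergraph α) (h : H.IsSoltes) (hd1 : H.diam = 1) :
    H.wiener = (H.verts.sym2.filter fun p => ¬ p.IsDiag).card := by
  rw [FinHypergraph.wiener, Finset.card_eq_sum_ones]
  refine Finset.sum_congr rfl ?_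
  intro p hp
  revert hp
  induction p using Sym2.ind with
  | _ a b =>
    intro hp
    rw [Finset.mem_filter, Finset.mk_mem_sym2_iff] at hp
    have hab : a ≠ b := fun hh => hp.2 (Sym2.mk_isDiag_iff.mpr hh)
    simpa using soltes_dist_one H h hd1 hp.1.1 hp.1.2 hab

open Classical in
private lemma wiener_delete (H : FinHypergraph α) (h : H.IsSoltes)
    (hd2 : ∀ v ∈ H.verts, (H.delete v).diam = 2) {v : α} (hv : v ∈ H.verts) :
    (H.delete v).wiener = ((H.verts.erase v).sym2.filter fun p => ¬ p.IsDiag).card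
      + (((H.verts.erase v).sym2.filter fun p => ¬ p.IsDiag).filter
          (fun p => ∀ e ∈ H.edges, (∀ y ∈ p, y ∈ e) → v ∈ e)).card := by
  rw [FinHypergraph.wiener]
  have hverts : (H.delete v).verts = H.verts.erase v := rfl
  rw [hverts]
  have hsum : ∀ p ∈ (H.verts.erase v).sym2.filter fun p => ¬ p.IsDiag,
      Sym2.lift ⟨fun u w => (H.delete v).dist u w, fun _ _ => SimpleGraph.dist_comm⟩ p
        = 1 + (if (∀ e ∈ H.edges, (∀ y ∈ p, y ∈ e) → v ∈ e) then 1 else 0) := by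
    intro p hp
    revert hp
    induction p using Sym2.ind with
    | _ a b =>
      intro hp
      rw [Finset.mem_filter, Finset.mk_mem_sym2_iff] at hp
      have hab : a ≠ b := fun hh => hp.2 (Sym2.mk_isDiag_iff.mpr hh)
      show (H.delete v).dist a b = _
      rw [soltes_delete_dist H h hd2 hv hp.1.1 hp.1.2 hab]
      congr 1
      refine if_congr ?_ rfl rfl
      constructor
      · intro hk e he hcov
        exact hk e he (sym2_cover_iff.mp hcov).1 (sym2_cover_iff.mp hcov).2
      · intro hk e he hae hbe
        exact hk e he (sym2_cover_iff.mpr ⟨hae, hbe⟩)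
  rw [Finset.sum_congr rfl hsum, Finset.sum_add_distrib, Finset.sum_const, smul_eq_mul, mul_one]
  congr 1
  have := Finset.sum_boole (R := ℕ)
    (fun p => ∀ e ∈ H.edges, (∀ y ∈ p, y ∈ e) → v ∈ e)
    ((H.verts.erase v).sym2.filter fun p => ¬ p.IsDiag)
  simpa using this

end Aux2
section Aux3
variable {α : Type*} [DecidableEq α]

private lemma card_filter_nat {β : Type*} (s : Finset β) (q : β → Prop) [DecidablePred q] :
    (s.filter q).card = ∑ x ∈ s, if q x then 1 else 0 := by
  simpa using (Finset.sum_boole (α := ℕ) q s).symm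

open Classical in
private lemma soltes_S_card (H : FinHypergraph α) (h : H.IsSoltes)
    (h4 : ∀ e ∈ H.edges, e.card = 4)
    (hd1 : H.diam = 1) (hd2 : ∀ v ∈ H.verts, (H.delete v).diam = 2) :
    ∀ p ∈ H.verts.sym2.filter fun p => ¬ p.IsDiag,
      (H.verts.filter fun x => x ∉ p ∧ ∀ e ∈ H.edges, (∀ y ∈ p, y ∈ e) → x ∈ e).card = 2 := by
  set P := H.verts.sym2.filter fun p => ¬ p.IsDiag with hP
  -- per-vertex equation from the Wiener condition
  have key : ∀ v ∈ H.verts,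
      (P.filter fun p => v ∉ p).card
        + ((P.filter fun p => v ∉ p).filter
            (fun p => ∀ e ∈ H.edges, (∀ y ∈ p, y ∈ e) → v ∈ e)).card
        = P.card := by
    intro v hv
    have hPv : ((H.verts.erase v).sym2.filter fun p => ¬ p.IsDiag)
        = P.filter fun p => v ∉ p := by
      ext z
      induction z using Sym2.ind with
      | _ a b =>
        simp only [hP, Finset.mem_filter, Finset.mk_mem_sym2_iff, Finset.mem_erase,
          Sym2.mem_iff]
        constructor
        · rintro ⟨⟨⟨ha1, ha2⟩, hb1, hb2⟩, hd⟩
          refine ⟨⟨⟨ha2, hb2⟩, hd⟩, ?_⟩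
          rintro (rfl | rfl)
          · exact ha1 rfl
          · exact hb1 rfl
        · rintro ⟨⟨⟨ha2, hb2⟩, hd⟩, hnv⟩
          push_neg at hnv
          exact ⟨⟨⟨fun hh => hnv.1 hh.symm, ha2⟩, fun hh => hnv.2 hh.symm, hb2⟩, hd⟩
    have heq := (h.2.2 v hv).2
    rw [wiener_delete H h hd2 hv, wiener_H H h hd1, hPv] at heq
    exact heq
  -- double counting
  have hswap :
      ∑ p ∈ P, (H.verts.filter fun x => x ∉ p ∧ ∀ e ∈ H.edges, (∀ y ∈ p, y ∈ e) → x ∈ e).card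
        = ∑ p ∈ P, (H.verts.filter fun x => x ∈ p).card := by
    have lhs_eq : ∀ v ∈ H.verts,
        ((P.filter fun p => v ∉ p).filter
            (fun p => ∀ e ∈ H.edges, (∀ y ∈ p, y ∈ e) → v ∈ e)).card
          = ∑ p ∈ P, if v ∉ p ∧ ∀ e ∈ H.edges, (∀ y ∈ p, y ∈ e) → v ∈ e then 1 else 0 := by
      intro v _
      rw [Finset.filter_filter, card_filter_nat]
    have rhs_eq : ∀ v ∈ H.verts,
        (P.filter fun p => v ∈ p).card = ∑ p ∈ P, if v ∈ p then 1 else 0 := by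
      intro v _
      rw [card_filter_nat]
    have hper : ∀ v ∈ H.verts,
        ((P.filter fun p => v ∉ p).filter
            (fun p => ∀ e ∈ H.edges, (∀ y ∈ p, y ∈ e) → v ∈ e)).card
          = (P.filter fun p => v ∈ p).card := by
      intro v hv
      have h1 := key v hv
      have h2 := Finset.card_filter_add_card_filter_not
        (s := P) (p := fun p => v ∈ p)
      omega
    calc ∑ p ∈ P, (H.verts.filter fun x =>
            x ∉ p ∧ ∀ e ∈ H.edges, (∀ y ∈ p, y ∈ e) → x ∈ e).card
        = ∑ p ∈ P, ∑ v ∈ H.verts,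
            (if v ∉ p ∧ ∀ e ∈ H.edges, (∀ y ∈ p, y ∈ e) → v ∈ e then 1 else 0) := by
          exact Finset.sum_congr rfl fun p _ => card_filter_nat _ _
      _ = ∑ v ∈ H.verts, ∑ p ∈ P,
            (if v ∉ p ∧ ∀ e ∈ H.edges, (∀ y ∈ p, y ∈ e) → v ∈ e then 1 else 0) :=
          Finset.sum_comm
      _ = ∑ v ∈ H.verts, (P.filter fun p => v ∈ p).card := by
          refine Finset.sum_congr rfl fun v hv => ?_
          rw [← lhs_eq v hv, hper v hv]
      _ = ∑ v ∈ H.verts, ∑ p ∈ P, (if v ∈ p then 1 else 0) :=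
          Finset.sum_congr rfl rhs_eq
      _ = ∑ p ∈ P, ∑ v ∈ H.verts, (if v ∈ p then 1 else 0) := Finset.sum_comm
      _ = ∑ p ∈ P, (H.verts.filter fun x => x ∈ p).card := by
          exact Finset.sum_congr rfl fun p _ => (card_filter_nat _ _).symm
  -- pointwise values
  have hmem2 : ∀ p ∈ P, (H.verts.filter fun x => x ∈ p).card = 2 := by
    intro p hp
    revert hp
    induction p using Sym2.ind with
    | _ a b =>
      intro hp
      rw [hP, Finset.mem_filter, Finset.mk_mem_sym2_iff] at hp
      have hab : a ≠ b := fun hh => hp.2 (Sym2.mk_isDiag_iff.mpr hh)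
      have : (H.verts.filter fun x => x ∈ (s(a, b) : Sym2 α)) = {a, b} := by
        ext x
        simp only [Finset.mem_filter, Sym2.mem_iff, Finset.mem_insert, Finset.mem_singleton]
        constructor
        · rintro ⟨-, hh⟩; exact hh
        · rintro (rfl | rfl)
          · exact ⟨hp.1.1, Or.inl rfl⟩
          · exact ⟨hp.1.2, Or.inr rfl⟩
      rw [this, Finset.card_pair hab]
  have hSle : ∀ p ∈ P,
      (H.verts.filter fun x => x ∉ p ∧ ∀ e ∈ H.edges, (∀ y ∈ p, y ∈ e) → x ∈ e).card ≤ 2 := by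
    intro p hp
    revert hp
    induction p using Sym2.ind with
    | _ a b =>
      intro hp
      rw [hP, Finset.mem_filter, Finset.mk_mem_sym2_iff] at hp
      have hab : a ≠ b := fun hh => hp.2 (Sym2.mk_isDiag_iff.mpr hh)
      obtain ⟨e, he, hae, hbe⟩ := soltes_cover H h hd1 hp.1.1 hp.1.2 hab
      have hsub : (H.verts.filter fun x =>
          x ∉ (s(a, b) : Sym2 α) ∧ ∀ e ∈ H.edges, (∀ y ∈ s(a, b), y ∈ e) → x ∈ e)
          ⊆ (e.erase a).erase b := by
        intro x hx
        rw [Finset.mem_filter] at hx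
        obtain ⟨-, hxp, hcond⟩ := hx
        have hxe : x ∈ e := hcond e he (sym2_cover_iff.mpr ⟨hae, hbe⟩)
        have hxa : x ≠ a := fun hh => hxp (hh ▸ Sym2.mem_mk_left a b)
        have hxb : x ≠ b := fun hh => hxp (hh ▸ Sym2.mem_mk_right a b)
        exact Finset.mem_erase.mpr ⟨hxb, Finset.mem_erase.mpr ⟨hxa, hxe⟩⟩
      have hcard : ((e.erase a).erase b).card = 2 := by
        rw [Finset.card_erase_of_mem (Finset.mem_erase.mpr ⟨hab.symm, hbe⟩),
          Finset.card_erase_of_mem hae, h4 e he]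
      calc _ ≤ ((e.erase a).erase b).card := Finset.card_le_card hsub
        _ = 2 := hcard
  -- conclude by sum rigidity
  exact (Finset.sum_eq_sum_iff_of_le fun p hp => hSle p hp).mp
    (by rw [hswap]; exact Finset.sum_congr rfl hmem2)

end Aux3

theorem stmt10 {α : Type*} [DecidableEq α] (H : FinHypergraph α)
    (h : H.IsSoltes) (h4 : ∀ e ∈ H.edges, e.card = 4)
    (hd1 : H.diam = 1) (hd2 : ∀ v ∈ H.verts, (H.delete v).diam = 2) :
    ∀ u ∈ H.verts, ∀ w ∈ H.verts, u ≠ w →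
      (H.edges.filter fun e => u ∈ e ∧ w ∈ e).card = 1 := by
  classical
  intro u hu w hw huw
  have hp : (s(u, w) : Sym2 α) ∈ H.verts.sym2.filter fun p => ¬ p.IsDiag :=
    Finset.mem_filter.mpr ⟨Finset.mk_mem_sym2_iff.mpr ⟨hu, hw⟩,
      fun hd => huw (Sym2.mk_isDiag_iff.mp hd)⟩
  have hS := soltes_S_card H h h4 hd1 hd2 _ hp
  obtain ⟨e, he, hue, hwe⟩ := soltes_cover H h hd1 hu hw huw
  have hpos : 0 < (H.edges.filter fun e => u ∈ e ∧ w ∈ e).card :=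
    Finset.card_pos.mpr ⟨e, Finset.mem_filter.mpr ⟨he, hue, hwe⟩⟩
  by_contra hne
  have h2 : 1 < (H.edges.filter fun e => u ∈ e ∧ w ∈ e).card := by omega
  obtain ⟨e1, he1, e2, he2, hne12⟩ := Finset.one_lt_card.mp h2
  rw [Finset.mem_filter] at he1 he2
  have hsub : (H.verts.filter fun x =>
      x ∉ (s(u, w) : Sym2 α) ∧ ∀ e ∈ H.edges, (∀ y ∈ s(u, w), y ∈ e) → x ∈ e)
      ⊆ ((e1 ∩ e2).erase u).erase w := by
    intro x hx
    rw [Finset.mem_filter] at hx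
    obtain ⟨-, hxp, hcond⟩ := hx
    have hx1 : x ∈ e1 := hcond e1 he1.1 (sym2_cover_iff.mpr he1.2)
    have hx2 : x ∈ e2 := hcond e2 he2.1 (sym2_cover_iff.mpr he2.2)
    have hxu : x ≠ u := fun hh => hxp (hh ▸ Sym2.mem_mk_left u w)
    have hxw : x ≠ w := fun hh => hxp (hh ▸ Sym2.mem_mk_right u w)
    exact Finset.mem_erase.mpr ⟨hxw, Finset.mem_erase.mpr ⟨hxu,
      Finset.mem_inter.mpr ⟨hx1, hx2⟩⟩⟩
  have hcap : (e1 ∩ e2).card ≤ 3 := by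
    by_contra hc
    push_neg at hc
    have hic : e1.card ≤ (e1 ∩ e2).card := by rw [h4 e1 he1.1]; omega
    have hieq : e1 ∩ e2 = e1 :=
      Finset.eq_of_subset_of_card_le Finset.inter_subset_left hic
    have h12 : e1 ⊆ e2 := hieq ▸ Finset.inter_subset_right
    exact hne12 (Finset.eq_of_subset_of_card_le h12
      (by rw [h4 e1 he1.1, h4 e2 he2.1]))
  have hle1 : (((e1 ∩ e2).erase u).erase w).card ≤ 1 := by
    have hu12 : u ∈ e1 ∩ e2 := Finset.mem_inter.mpr ⟨he1.2.1, he2.2.1⟩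
    have hw12 : w ∈ (e1 ∩ e2).erase u :=
      Finset.mem_erase.mpr ⟨huw.symm, Finset.mem_inter.mpr ⟨he1.2.2, he2.2.2⟩⟩
    rw [Finset.card_erase_of_mem hw12, Finset.card_erase_of_mem hu12]
    omega
  have := Finset.card_le_card hsub
  omega
end

section
/- Every vertex of a Šoltés hypergraph belongs to at least 2 edges, i.e., every Šoltés hypergraph has minimum degree at least 2. -/
variable {α : Type*} {β : Type*}

lemma exists_edge_of_connected_aux {α : Type*} [DecidableEq α] (H : FinHypergraph α)
    (hc : H.Connected) {x y : α} (hx : x ∈ H.verts) (hy : y ∈ H.verts) (hxy : x ≠ y) :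
    ∃ e ∈ H.edges, x ∈ e := by
  obtain ⟨p⟩ := hc x hx y hy
  cases p with
  | nil => exact absurd rfl hxy
  | cons hadj p => obtain ⟨-, e, he, hxe, -⟩ := hadj; exact ⟨e, he, hxe⟩

theorem stmt13 {α : Type*} [DecidableEq α] (H : FinHypergraph α) (h : H.IsSoltes) :
    ∀ v ∈ H.verts, 2 ≤ H.degree v := by
  intro v hv
  by_contra hlt
  push_neg at hlt
  obtain ⟨u', hu', hne'⟩ := Finset.exists_mem_ne (lt_of_lt_of_le one_lt_two h.1) v
  obtain ⟨e, he, hve⟩ := exists_edge_of_connected_aux H h.2.1 hv hu' hne'.symm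
  have huniq : ∀ e' ∈ H.edges, v ∈ e' → e' = e := by
    intro e' he' hve'
    have h1 : (H.edges.filter fun e => v ∈ e).card ≤ 1 := Nat.lt_succ_iff.mp hlt
    exact Finset.card_le_one.mp h1 e' (Finset.mem_filter.mpr ⟨he', hve'⟩) e
      (Finset.mem_filter.mpr ⟨he, hve⟩)
  obtain ⟨u, hue, hune⟩ := Finset.exists_mem_ne
    (lt_of_lt_of_le one_lt_two (H.edge_card e he)) v
  have huV : u ∈ H.verts := H.edge_sub e he hue
  by_cases hw : ∃ w ∈ H.verts, w ≠ v ∧ w ≠ u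
  · obtain ⟨w, hwV, hwv, hwu⟩ := hw
    have hcd : (H.delete u).Connected := (h.2.2 u huV).1
    have hvm : v ∈ (H.delete u).verts :=
      Finset.mem_erase.mpr ⟨hune.symm, hv⟩
    have hwm : w ∈ (H.delete u).verts := Finset.mem_erase.mpr ⟨hwu, hwV⟩
    obtain ⟨e', he', hve'⟩ := exists_edge_of_connected_aux _ hcd hvm hwm hwv.symm
    rw [FinHypergraph.delete, Finset.mem_filter] at he'
    exact he'.2 (huniq e' he'.1 hve' ▸ hue)
  · push_neg at hw
    have hW := (h.2.2 v hv).2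
    have h0 : (H.delete v).wiener = 0 := by
      rw [FinHypergraph.wiener]
      apply Finset.sum_eq_zero
      intro p hp
      rw [Finset.mem_filter] at hp
      exfalso
      obtain ⟨a, b⟩ := p
      rw [Finset.mk_mem_sym2_iff] at hp
      obtain ⟨⟨ha, hb⟩, hd⟩ := hp
      rw [FinHypergraph.delete] at ha hb
      have ha' := Finset.mem_erase.mp ha
      have hb' := Finset.mem_erase.mp hb
      have hau : a = u := hw a ha'.2 ha'.1
      have hbu : b = u := hw b hb'.2 hb'.1
      exact hd (by rw [Sym2.isDiag_iff_proj_eq]; simp [hau, hbu])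
    rw [h0] at hW
    have hmem : s(v, u) ∈ H.verts.sym2.filter (fun p => ¬ p.IsDiag) := by
      rw [Finset.mem_filter, Finset.mk_mem_sym2_iff]
      refine ⟨⟨hv, huV⟩, ?_⟩
      rw [Sym2.isDiag_iff_proj_eq]
      exact hune.symm
    have hdist : 1 ≤ H.dist v u := by
      have hr : H.twoSection.Reachable v u := h.2.1 v hv u huV
      exact hr.pos_dist_of_ne hune.symm
    have hle : H.dist v u ≤ H.wiener := by
      have := Finset.single_le_sum (f := fun p =>
        Sym2.lift ⟨fun a b => H.dist a b, fun _ _ => SimpleGraph.dist_comm⟩ p)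
        (fun i _ => Nat.zero_le _) hmem
      simpa [FinHypergraph.wiener] using this
    omega
end

section
/- If H is a Šoltés hypergraph with m edges and maximum degree Δ (the maximum over all vertices of the number of edges containing that vertex), then m ≥ Δ + 2. -/
variable {α : Type*} {β : Type*}

theorem stmt14 {α : Type*} [DecidableEq α] (H : FinHypergraph α) (h : H.IsSoltes) :
    H.verts.sup H.degree + 2 ≤ H.edges.card := by
  obtain ⟨hcard, hconn, hdel⟩ := h
  have hne : H.verts.Nonempty := Finset.card_pos.mp (by omega)
  obtain ⟨v, hv, hsup⟩ := Finset.exists_mem_eq_sup H.verts hne H.degree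
  rw [hsup]
  set H' := H.delete v with hH'
  obtain ⟨hconn', hW⟩ := hdel v hv
  rw [← hH'] at hconn' hW
  have hsplit : (H.edges.filter fun e => v ∉ e).card + H.degree v = H.edges.card := by
    rw [FinHypergraph.degree]
    have := Finset.card_filter_add_card_filter_not (s := H.edges) (p := fun e => v ∉ e)
    simpa [not_not] using this
  -- there is another vertex u ≠ v
  obtain ⟨u, hu, hune⟩ := Finset.exists_mem_ne hcard v
  -- W(H) ≥ number of nondiagonal pairs of H.verts
  have hWge : (H.verts.sym2.filter fun p => ¬ p.IsDiag).card ≤ H.wiener := by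
    rw [FinHypergraph.wiener, Finset.card_eq_sum_ones]
    refine Finset.sum_le_sum ?_
    intro p hp
    induction p using Sym2.ind with
    | _ a b =>
      rw [Finset.mem_filter, Finset.mk_mem_sym2_iff, Sym2.mk_isDiag_iff] at hp
      obtain ⟨⟨ha, hb⟩, hab⟩ := hp
      simpa [FinHypergraph.dist, Nat.one_le_iff_ne_zero, Nat.pos_iff_ne_zero] using (hconn a ha b hb).pos_dist_of_ne hab
  -- key claim: H' has at least 2 edges
  have hkey : 2 ≤ H'.edges.card := by
    by_contra hlt
    push_neg at hlt
    interval_cases hc : H'.edges.card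
    · -- no edges: H' verts has ≤ 1 element, wiener 0
      have hempty : H'.edges = ∅ := Finset.card_eq_zero.mp hc
      have hv1 : H'.verts.card ≤ 1 := by
        by_contra h1
        push_neg at h1
        obtain ⟨a, ha, b, hb, hab⟩ := Finset.one_lt_card.mp h1
        obtain ⟨p⟩ := hconn' a ha b hb
        cases p with
        | nil => exact hab rfl
        | cons hadj _ =>
          obtain ⟨_, e, he, _⟩ := hadj
          rw [hempty] at he
          exact absurd he (Finset.notMem_empty _)
      have hW0 : H'.wiener = 0 := by
        rw [FinHypergraph.wiener]
        apply Finset.sum_eq_zero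
        intro p hp
        rw [Finset.mem_filter] at hp
        exfalso
        induction p using Sym2.ind with
        | _ a b =>
          rw [Finset.mk_mem_sym2_iff] at hp
          obtain ⟨⟨ha, hb⟩, hd⟩ := hp
          rw [Sym2.mk_isDiag_iff] at hd
          exact hd (Finset.card_le_one.mp hv1 a ha b hb)
      have : 0 < H.wiener := by
        refine lt_of_lt_of_le ?_ hWge
        rw [Finset.card_pos]
        exact ⟨s(u, v), by
          simp [Finset.mk_mem_sym2_iff, Sym2.mk_isDiag_iff, hu, hv, hune]⟩
      omega
    · -- exactly one edge e: all verts of H' lie in e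
      obtain ⟨e, he⟩ := Finset.card_eq_one.mp hc
      have heme : e ∈ H'.edges := by simp [he]
      have hesub : e ⊆ H'.verts := H'.edge_sub e heme
      have hvsub : H'.verts ⊆ e := by
        intro w hw
        by_contra hwe
        have hepos : 0 < e.card := by have := H'.edge_card e heme; omega
        obtain ⟨x, hx⟩ := Finset.card_pos.mp hepos
        have hwx : w ≠ x := fun hh => hwe (hh ▸ hx)
        obtain ⟨p⟩ := hconn' w hw x (hesub hx)
        cases p with
        | nil => exact hwx rfl
        | cons hadj _ =>
          obtain ⟨_, f, hf, hwf, _⟩ := hadj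
          rw [he, Finset.mem_singleton] at hf
          exact hwe (hf ▸ hwf)
      -- W(H') = number of nondiagonal pairs of H'.verts
      have hW'eq : H'.wiener = (H'.verts.sym2.filter fun p => ¬ p.IsDiag).card := by
        rw [FinHypergraph.wiener, Finset.card_eq_sum_ones]
        refine Finset.sum_congr rfl ?_
        intro p hp
        induction p using Sym2.ind with
        | _ a b =>
          rw [Finset.mem_filter, Finset.mk_mem_sym2_iff, Sym2.mk_isDiag_iff] at hp
          obtain ⟨⟨ha, hb⟩, hab⟩ := hp
          have : (H'.twoSection).Adj a b := ⟨hab, e, heme, hvsub ha, hvsub hb⟩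
          simpa [FinHypergraph.dist] using SimpleGraph.dist_eq_one_iff_adj.mpr this
      -- strict inequality on pair counts
      have hsub : (H'.verts.sym2.filter fun p => ¬ p.IsDiag) ⊂
          (H.verts.sym2.filter fun p => ¬ p.IsDiag) := by
        constructor
        · intro p hp
          rw [Finset.mem_filter] at hp ⊢
          refine ⟨Finset.sym2_mono ?_ hp.1, hp.2⟩
          rw [hH']
          exact Finset.erase_subset v H.verts
        · intro hcon
          have : s(u, v) ∈ H'.verts.sym2.filter fun p => ¬ p.IsDiag := by
            apply hcon
            simp [Finset.mk_mem_sym2_iff, Sym2.mk_isDiag_iff, hu, hv, hune]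
          rw [Finset.mem_filter, Finset.mk_mem_sym2_iff] at this
          have := this.1.2
          rw [hH'] at this
          exact Finset.notMem_erase v H.verts this
      have := Finset.card_lt_card hsub
      omega
  have : H'.edges.card = (H.edges.filter fun e => v ∉ e).card := rfl
  omega
end

section
/- In a Šoltés hypergraph of order at least 3, no two distinct vertices are contained in exactly the same set of edges. -/
variable {α : Type*} {β : Type*}

/-- A hypergraph: a finite vertex set together with a set of edges,
each an at-least-2-element subset of the vertex set. -/
structure Hypergraph' (α : Type*) where
  verts : Finset α
  edges : Finset (Finset α)
  edge_sub : ∀ e ∈ edges, e ⊆ verts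
  edge_card : ∀ e ∈ edges, 2 ≤ e.card

namespace Hypergraph'

/-- The 2-section graph of a hypergraph: two distinct vertices are adjacent
iff some edge contains both. -/
def twoSection (H : Hypergraph' α) : SimpleGraph α where
  Adj u v := u ≠ v ∧ ∃ e ∈ H.edges, u ∈ e ∧ v ∈ e
  symm := by
    refine ⟨?_⟩
    rintro u v ⟨huv, e, he, hu, hv⟩
    exact ⟨huv.symm, e, he, hv, hu⟩
  loopless := by
    refine ⟨?_⟩
    rintro u ⟨h, -⟩
    exact h rfl

/-- Distance between two vertices: graph distance in the 2-section. -/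
noncomputable def dist (H : Hypergraph' α) (u v : α) : ℕ :=
  H.twoSection.dist u v

/-- A hypergraph is connected if every two of its vertices are joined by a path. -/
def Connected (H : Hypergraph' α) : Prop :=
  ∀ u ∈ H.verts, ∀ v ∈ H.verts, H.twoSection.Reachable u v

/-- The Wiener index (total distance): the sum of distances over all
unordered pairs of distinct vertices. -/
noncomputable def wiener [DecidableEq α] (H : Hypergraph' α) : ℕ :=
  ∑ p ∈ H.verts.sym2.filter (fun p => ¬ p.IsDiag),
    Sym2.lift ⟨fun u v => H.dist u v, fun _ _ => SimpleGraph.dist_comm⟩ p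

/-- Vertex deletion: remove the vertex and all edges containing it. -/
def delete [DecidableEq α] (H : Hypergraph' α) (v : α) : Hypergraph' α where
  verts := H.verts.erase v
  edges := H.edges.filter fun e => v ∉ e
  edge_sub := by
    intro e he x hx
    rw [Finset.mem_filter] at he
    exact Finset.mem_erase.mpr ⟨fun h => he.2 (h ▸ hx), H.edge_sub e he.1 hx⟩
  edge_card := fun e he => H.edge_card e (Finset.mem_filter.mp he).1

/-- A Šoltés hypergraph: a connected hypergraph on at least 2 vertices such that
deleting any vertex leaves a connected hypergraph with the same Wiener index. -/
def IsSoltes [DecidableEq α] (H : Hypergraph' α) : Prop :=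
  2 ≤ H.verts.card ∧ H.Connected ∧
    ∀ v ∈ H.verts, (H.delete v).Connected ∧ (H.delete v).wiener = H.wiener

/-- The diameter: the maximum distance over unordered pairs of distinct vertices. -/
noncomputable def diam [DecidableEq α] (H : Hypergraph' α) : ℕ :=
  H.verts.offDiag.sup fun p => H.dist p.1 p.2

/-- The degree of a vertex: the number of edges containing it. -/
def degree [DecidableEq α] (H : Hypergraph' α) (v : α) : ℕ :=
  (H.edges.filter fun e => v ∈ e).card

/-- Hypergraph' isomorphism: a bijection between the vertex sets mapping
edges onto edges. -/
def IsIsoTo [DecidableEq β] (H : Hypergraph' α) (H' : Hypergraph' β) : Prop :=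
  ∃ f : α → β, Set.InjOn f ↑H.verts ∧ H'.verts = H.verts.image f ∧
    H'.edges = H.edges.image fun e => e.image f

end Hypergraph'

theorem stmt15 {α : Type*} [DecidableEq α] (H : Hypergraph' α) (h : H.IsSoltes)
    (h3 : 3 ≤ H.verts.card) :
    ∀ u ∈ H.verts, ∀ v ∈ H.verts, u ≠ v →
      (H.edges.filter fun e => u ∈ e) ≠ (H.edges.filter fun e => v ∈ e) := by
  intro u hu v hv huv heq
  -- H.delete u is connected
  obtain ⟨-, -, hdel⟩ := h
  obtain ⟨hconn, -⟩ := hdel u hu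
  -- v is a vertex of H.delete u
  have hv' : v ∈ (H.delete u).verts := Finset.mem_erase.mpr ⟨fun hvu => huv (hvu ▸ rfl), hv⟩
  -- there is another vertex x ≠ v in H.delete u
  have hcard : 1 < (H.delete u).verts.card := by
    have : (H.delete u).verts.card = H.verts.card - 1 := Finset.card_erase_of_mem hu
    omega
  obtain ⟨x, hx, hxv⟩ := Finset.exists_mem_ne hcard v
  -- v is reachable from x in (H.delete u).twoSection, so v has a neighbor
  have hreach := hconn v hv' x hx
  obtain ⟨w⟩ := hreach
  cases w with
  | nil => exact hxv rfl
  | cons hadj p =>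
    obtain ⟨-, e, he, hve, -⟩ := hadj
    rw [Hypergraph'.delete, Finset.mem_filter] at he
    obtain ⟨heE, hue⟩ := he
    have : e ∈ H.edges.filter fun e => u ∈ e := by
      rw [heq, Finset.mem_filter]; exact ⟨heE, hve⟩
    exact hue (Finset.mem_filter.mp this).2
end
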